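/- arXiv:1502.02462 — 3 statements merged into one kernel-verified Lean document; each statement's English description precedes it below -/
import Mathlib

section
/- Let p ∈ ℕ, p > 2, and let m : ℕ → ℝ₊ satisfy c^j(pj)! ≤ m(j) ≤ C^j(pj)! for all j and some c, C > 0. Let P(ζ) be a homogeneous polynomial of degree p on ℂⁿ with P(−i,…,−i) ≠ 0. Then the entire function F(ζ) = Σ_{j=0}^∞ P(−iζ)^j/m(j) does NOT satisfy a Paley–Wiener–Schwartz bound: there exist no constants C' > 0, N ∈ ℕ, r > 0 with |F(ζ)| ≤ C'(1+|ζ|)^N e^{r|Im ζ|} for all ζ ∈ ℂⁿ. -/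
open Complex MvPolynomial

private lemma aux_eval_mul {n p : ℕ} {P : MvPolynomial (Fin n) ℂ} (hP : P.IsHomogeneous p)
    (z : ℂ) (x : Fin n → ℂ) :
    MvPolynomial.eval (fun k => z * x k) P = z ^ p * MvPolynomial.eval x P := by
  rw [eval_eq', eval_eq', Finset.mul_sum]
  refine Finset.sum_congr rfl fun d hd => ?_
  have h1 : Finsupp.degree d = p := by
    rw [Finsupp.degree_eq_weight_one]
    exact hP (MvPolynomial.mem_support_iff.mp hd)
  have h2 : ∑ i, d i = p := by
    rw [← h1, Finsupp.degree]
    exact (Finset.sum_subset (Finset.subset_univ _)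
      (fun i _ hi => Finsupp.notMem_support_iff.mp hi)).symm
  calc coeff d P * ∏ i, (z * x i) ^ d i
      = coeff d P * ((∏ i, z ^ d i) * ∏ i, x i ^ d i) := by
        rw [← Finset.prod_mul_distrib]
        simp [mul_pow]
    _ = z ^ p * (coeff d P * ∏ i, x i ^ d i) := by
        rw [Finset.prod_pow_eq_pow_sum, h2]; ring

private lemma aux_summable {p : ℕ} (hp : 0 < p) (q : ℝ) (hq : 0 ≤ q) :
    Summable (fun j : ℕ => q ^ j / (Nat.factorial (p * j) : ℝ)) := by
  refine Summable.of_nonneg_of_le (fun j => by positivity) (fun j => ?_)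
    (Real.summable_pow_div_factorial q)
  have h : (Nat.factorial j : ℝ) ≤ (Nat.factorial (p * j) : ℝ) := by
    exact_mod_cast Nat.factorial_le (Nat.le_mul_of_pos_left j hp)
  exact div_le_div_of_nonneg_left (pow_nonneg hq j) (by positivity) h

set_option maxHeartbeats 1000000 in
/-- For `p > 2`, a homogeneous polynomial `P` of degree `p` with `P(-i,…,-i) ≠ 0`,
and `m` with `c^j (pj)! ≤ m(j) ≤ C^j (pj)!`, the entire function
`F(ζ) = Σ_j P(-iζ)^j/m(j)` satisfies no Paley–Wiener–Schwartz bound. -/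
theorem stmt12 {n p : ℕ} (hp : 2 < p) (P : MvPolynomial (Fin n) ℂ)
    (hP : P.IsHomogeneous p)
    (hP0 : MvPolynomial.eval (fun _ : Fin n => -Complex.I) P ≠ 0)
    (m : ℕ → ℝ) (hmpos : ∀ j, 0 < m j)
    (c C : ℝ) (hc : 0 < c) (hC : 0 < C)
    (hm : ∀ j : ℕ, c ^ j * (Nat.factorial (p * j) : ℝ) ≤ m j ∧
      m j ≤ C ^ j * (Nat.factorial (p * j) : ℝ)) :
    ¬ ∃ (C' : ℝ) (N : ℕ) (r : ℝ), 0 < C' ∧ 0 < r ∧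
      ∀ ζ : Fin n → ℂ,
        ‖(∑' j : ℕ,
            (MvPolynomial.eval (fun k => -Complex.I * ζ k) P) ^ j / (m j : ℂ))‖ ≤
          C' * (1 + Real.sqrt (∑ k : Fin n, ‖ζ k‖ ^ 2)) ^ N *
            Real.exp (r * Real.sqrt (∑ k : Fin n, (ζ k).im ^ 2)) := by
  rintro ⟨C', N, r, hC'0, hr0, hbound⟩
  set A : ℂ := MvPolynomial.eval (fun _ : Fin n => -Complex.I) P with hA
  set a : ℝ := ‖A‖ with ha_def
  have ha : 0 < a := norm_pos_iff.mpr hP0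
  have hp0 : 0 < p := by omega
  have hp3 : (3 : ℝ) ≤ p := by exact_mod_cast hp
  have hpR : (0 : ℝ) < p := by positivity
  set g : ℂ → ℂ := fun z => ∑' j : ℕ, (z ^ p * A) ^ j / (m j : ℂ) with hg_def
  -- evaluation identity
  have hEval : ∀ z : ℂ, MvPolynomial.eval (fun k : Fin n => -Complex.I * z) P = z ^ p * A := by
    intro z
    have h := aux_eval_mul hP z (fun _ : Fin n => -Complex.I)
    have he : (fun k : Fin n => -Complex.I * z) = (fun _ : Fin n => z * -Complex.I) := by
      funext k; ring
    rw [he, h]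
  -- real-term formulas and estimates
  have habs_term : ∀ (z : ℂ) (j : ℕ),
      ‖(z ^ p * A) ^ j / (m j : ℂ)‖ = (‖z‖ ^ p * a) ^ j / m j := by
    intro z j
    rw [norm_div, norm_pow, norm_mul, norm_pow, Complex.norm_real, Real.norm_eq_abs, abs_of_pos (hmpos j)]
  have hterm_le : ∀ (X : ℝ), 0 ≤ X → ∀ j : ℕ,
      (X ^ p * a) ^ j / m j ≤ (X ^ p * a / c) ^ j / (Nat.factorial (p * j) : ℝ) := by
    intro X hX j
    calc (X ^ p * a) ^ j / m j
        ≤ (X ^ p * a) ^ j / (c ^ j * (Nat.factorial (p * j) : ℝ)) :=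
          div_le_div_of_nonneg_left (by positivity) (by positivity) (hm j).1
      _ = (X ^ p * a / c) ^ j / (Nat.factorial (p * j) : ℝ) := by
          rw [div_pow, div_div]
  have hsum_norm : ∀ z : ℂ, Summable (fun j => ‖(z ^ p * A) ^ j / (m j : ℂ)‖) := by
    intro z
    refine Summable.of_nonneg_of_le (fun j => norm_nonneg _) (fun j => ?_)
      (aux_summable hp0 (‖z‖ ^ p * a / c) (by positivity))
    rw [habs_term]
    exact hterm_le _ (by positivity) j
  have hsum : ∀ z : ℂ, Summable (fun j => (z ^ p * A) ^ j / (m j : ℂ)) := by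
    intro z
    apply Summable.of_norm
    exact hsum_norm z
  -- growth estimate
  set κ : ℝ := (a / c) ^ ((p : ℝ)⁻¹) with hκ_def
  have hκp : κ ^ p = a / c := Real.rpow_inv_natCast_pow (le_of_lt (div_pos ha hc)) hp0.ne'
  have hκ0 : 0 ≤ κ := Real.rpow_nonneg (by positivity) _
  have hgrow : ∀ z : ℂ, ‖g z‖ ≤ Real.exp (κ * ‖z‖) := by
    intro z
    have hn : Summable fun j => ‖(z ^ p * A) ^ j / (m j : ℂ)‖ := by
      exact hsum_norm z
    have h1 : ‖g z‖ ≤ ∑' j, ‖(z ^ p * A) ^ j / (m j : ℂ)‖ := by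
      exact norm_tsum_le_tsum_norm hn
    have hsum2 : Summable (fun j : ℕ =>
        (κ * ‖z‖) ^ (p * j) / (Nat.factorial (p * j) : ℝ)) := by
      have := aux_summable hp0 ((κ * ‖z‖) ^ p) (by positivity)
      simpa only [← pow_mul] using this
    have h2 : ∑' j, ‖(z ^ p * A) ^ j / (m j : ℂ)‖ ≤
        ∑' j : ℕ, (κ * ‖z‖) ^ (p * j) / (Nat.factorial (p * j) : ℝ) := by
      refine Summable.tsum_le_tsum (fun j => ?_) (hsum_norm z) hsum2
      rw [habs_term]
      refine (hterm_le _ (by positivity) j).trans_eq ?_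
      congr 1
      rw [pow_mul, mul_pow, hκp]
      ring
    have h3 : ∑' j : ℕ, (κ * ‖z‖) ^ (p * j) / (Nat.factorial (p * j) : ℝ) ≤
        ∑' k : ℕ, (κ * ‖z‖) ^ k / (Nat.factorial k : ℝ) := by
      refine Summable.tsum_le_tsum_of_inj (fun j => p * j)
        (fun i j hij => by simpa [hp0.ne'] using hij)
        (fun k _ => by positivity) (fun j => le_rfl) hsum2
        (Real.summable_pow_div_factorial _)
    have h4 : ∑' k : ℕ, (κ * ‖z‖) ^ k / (Nat.factorial k : ℝ) =
        Real.exp (κ * ‖z‖) := by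
      rw [Real.exp_eq_exp_ℝ, NormedSpace.exp_eq_tsum_div]
    linarith
  -- entirety
  have hgdiff : Differentiable ℂ g := by
    intro z₀
    set R : ℝ := ‖z₀‖ + 1 with hR_def
    have hR0 : 0 < R := by positivity
    have hdiff : DifferentiableOn ℂ g (Metric.ball (0 : ℂ) R) := by
      refine differentiableOn_tsum_of_summable_norm
        (u := fun j => (R ^ p * a / c) ^ j / (Nat.factorial (p * j) : ℝ))
        (aux_summable hp0 _ (by positivity)) (fun j => ?_) Metric.isOpen_ball
        (fun j w hw => ?_)
      · exact (((differentiable_pow p).mul_const A).pow j).div_const (m j : ℂ) |>.differentiableOn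
      · have hwR : ‖w‖ ≤ R := by
          have := Metric.mem_ball.mp hw
          rw [dist_zero_right] at this
          exact le_of_lt this
        rw [habs_term]
        calc (‖w‖ ^ p * a) ^ j / m j
            ≤ (R ^ p * a) ^ j / m j := by
              refine div_le_div_of_nonneg_right ?_ (hmpos j).le
              have hxy : ‖w‖ ^ p * a ≤ R ^ p * a := by
                have := pow_le_pow_left₀ (norm_nonneg w) hwR p
                nlinarith
              exact pow_le_pow_left₀ (by positivity) hxy j
          _ ≤ (R ^ p * a / c) ^ j / (Nat.factorial (p * j) : ℝ) := hterm_le R hR0.le j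
    exact (hdiff.differentiableAt (Metric.isOpen_ball.mem_nhds (by
      rw [Metric.mem_ball, dist_zero_right]; exact lt_add_one _)))
  set M1 : ℝ := max 1 (Real.sqrt n) with hM1_def
  have hM1 : 1 ≤ M1 := le_max_left _ _
  have hM1n : Real.sqrt n ≤ M1 := le_max_right _ _
  -- bound at nonnegative real points
  have hgreal : ∀ x : ℝ, 0 ≤ x → ‖g ((x : ℝ) : ℂ)‖ ≤ C' * (M1 * (1 + x)) ^ N := by
    intro x hx
    have h := hbound (fun _ : Fin n => (x : ℂ))
    have h1 : (MvPolynomial.eval (fun k : Fin n => -Complex.I * (x : ℂ)) P) = ((x : ℂ)) ^ p * A :=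
      hEval (x : ℂ)
    rw [show (fun k : Fin n => -Complex.I * (fun _ : Fin n => (x : ℂ)) k)
        = (fun k : Fin n => -Complex.I * (x : ℂ)) from rfl, h1] at h
    have h2 : ∑ k : Fin n, ‖(x : ℂ)‖ ^ 2 = (n : ℝ) * x ^ 2 := by
      rw [Finset.sum_const, Finset.card_univ, Fintype.card_fin, nsmul_eq_mul,
        Complex.norm_of_nonneg hx]
    have h3 : ∑ k : Fin n, ((x : ℂ)).im ^ 2 = 0 := by
      simp
    rw [h2, h3] at h
    have h4 : Real.sqrt ((n : ℝ) * x ^ 2) = Real.sqrt n * x := by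
      rw [Real.sqrt_mul (Nat.cast_nonneg n), Real.sqrt_sq hx]
    rw [h4, Real.sqrt_zero, mul_zero, Real.exp_zero, mul_one] at h
    refine h.trans ?_
    have h5 : 1 + Real.sqrt n * x ≤ M1 * (1 + x) := by
      have h6 : Real.sqrt n * x ≤ M1 * x := by
        exact mul_le_mul_of_nonneg_right hM1n hx
      nlinarith
    gcongr
  -- the direction ω
  set θ : ℝ := -(Complex.arg A) / p with hθ_def
  have hθ1 : θ ≤ Real.pi / p := by
    rw [hθ_def]
    exact div_le_div_of_nonneg_right (by linarith [Complex.neg_pi_lt_arg A]) hpR.le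
  have hθ2 : -(Real.pi / p) ≤ θ := by
    rw [hθ_def, ← neg_div]
    exact div_le_div_of_nonneg_right (by linarith [Complex.arg_le_pi A]) hpR.le
  set ω : ℂ := Complex.exp ((θ : ℂ) * Complex.I) with hω_def
  have hωabs : ‖ω‖ = 1 := by
    rw [hω_def, Complex.norm_exp]
    norm_num
  have hωpA : ω ^ p * A = ((a : ℝ) : ℂ) := by
    have hωp : ω ^ p = Complex.exp (((-(Complex.arg A) : ℝ) : ℂ) * Complex.I) := by
      rw [hω_def, ← Complex.exp_nat_mul]
      congr 1
      have : (p : ℝ) * θ = -(Complex.arg A) := by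
        rw [hθ_def]; field_simp
      push_cast [← this]
      ring
    calc ω ^ p * A
        = Complex.exp (((-(Complex.arg A) : ℝ) : ℂ) * Complex.I) *
            ((a : ℝ) * Complex.exp ((Complex.arg A : ℂ) * Complex.I)) := by
          rw [hωp]
          congr 1
          rw [ha_def]
          exact (Complex.norm_mul_exp_arg_mul_I A).symm
      _ = ((a : ℝ) : ℂ) * Complex.exp (((-(Complex.arg A) : ℝ) : ℂ) * Complex.I
            + (Complex.arg A : ℂ) * Complex.I) := by
          rw [Complex.exp_add]; ring
      _ = ((a : ℝ) : ℂ) := by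
          have : ((-(Complex.arg A) : ℝ) : ℂ) * Complex.I + (Complex.arg A : ℂ) * Complex.I = 0 := by
            push_cast; ring
          rw [this, Complex.exp_zero, mul_one]
  have hπ : (0:ℝ) < Real.pi := Real.pi_pos
  set α : ℝ := if 0 < θ then 0 else -(2 * Real.pi / p) with hα_def
  set β : ℝ := α + 2 * Real.pi / p with hβ_def
  have hβα : β - α = 2 * Real.pi / p := by rw [hβ_def]; ring
  have hαβ : α < β := by
    rw [hβ_def]
    have : 0 < 2 * Real.pi / p := by positivity
    linarith
  have hθα : α ≤ θ := by
    rw [hα_def]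
    split
    · linarith
    · push_neg at *
      have h1 : Real.pi / p ≤ 2 * Real.pi / p := by
        apply div_le_div_of_nonneg_right (by linarith) hpR.le
      linarith
  have hθβ : θ ≤ β := by
    rw [hβ_def, hα_def]
    split
    · have h1 : Real.pi / p ≤ 2 * Real.pi / p := by
        apply div_le_div_of_nonneg_right (by linarith) hpR.le
      linarith
    · push_neg at *
      linarith
  have hkα : ∃ k : ℤ, (p : ℝ) * α = k * (2 * Real.pi) := by
    rw [hα_def]
    split
    · exact ⟨0, by simp⟩
    · refine ⟨-1, ?_⟩
      push_cast
      field_simp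
  have hkβ : ∃ k : ℤ, (p : ℝ) * β = k * (2 * Real.pi) := by
    obtain ⟨k, hk⟩ := hkα
    refine ⟨k + 1, ?_⟩
    rw [hβ_def, mul_add, hk]
    push_cast
    field_simp
  clear_value α β
  -- rotation lemma
  have hrot : ∀ γ : ℝ, (∃ k : ℤ, (p : ℝ) * γ = k * (2 * Real.pi)) → ∀ w : ℂ, w.im = γ →
      (Complex.exp w) ^ p = (((Real.exp w.re : ℝ)) : ℂ) ^ p := by
    rintro γ ⟨k, hk⟩ w hw
    have h1 : (Complex.exp w) ^ p = Complex.exp ((p : ℂ) * w) := (Complex.exp_nat_mul w p).symm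
    have h2 : (((Real.exp w.re : ℝ)) : ℂ) ^ p = Complex.exp ((p : ℂ) * (w.re : ℂ)) := by
      rw [Complex.ofReal_exp, ← Complex.exp_nat_mul]
    rw [h1, h2]
    have hk' : (p : ℂ) * (γ : ℂ) = (k : ℂ) * (2 * (Real.pi : ℂ)) := by
      exact_mod_cast congrArg (fun t : ℝ => (t : ℂ)) hk
    have h3 : (p : ℂ) * w = (p : ℂ) * (w.re : ℂ) + (k : ℂ) * (2 * (Real.pi : ℂ) * Complex.I) := by
      have hw' : w = (w.re : ℂ) + (γ : ℂ) * Complex.I := by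
        rw [← hw]
        exact (Complex.re_add_im w).symm
      nth_rewrite 1 [hw']
      linear_combination Complex.I * hk'
    rw [h3, Complex.exp_add, Complex.exp_int_mul_two_pi_mul_I, mul_one]
  -- g depends only on z ^ p
  have hgp : ∀ z w : ℂ, z ^ p = w ^ p → g z = g w := by
    intro z w h
    rw [hg_def]
    simp only
    rw [h]
  set ψ : ℝ := (α + β) / 2 with hψ_def
  set lam : ℂ := Complex.exp ((ψ : ℂ) * Complex.I) with hlam_def
  have hlam1 : ‖lam‖ = 1 := by rw [hlam_def, Complex.norm_exp]; norm_num
  have hden : ∀ w : ℂ, α ≤ w.im → w.im ≤ β →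
      (1 + Real.exp w.re) / 2 ≤ ‖lam + Complex.exp w‖ := by
    intro w hwa hwb
    have hΔ : |w.im - ψ| ≤ Real.pi / 3 := by
      have h1 : |w.im - ψ| ≤ (β - α) / 2 := by
        rw [abs_le, hψ_def]
        constructor <;> [linarith; linarith]
      have h2 : (β - α) / 2 = Real.pi / p := by rw [hβα]; ring
      have h3 : Real.pi / p ≤ Real.pi / 3 := by
        apply div_le_div_of_nonneg_left hπ.le (by norm_num) hp3
      linarith
    have hcos : (1:ℝ)/2 ≤ Real.cos (w.im - ψ) := by
      rw [← Real.cos_abs, ← Real.cos_pi_div_three]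
      exact Real.cos_le_cos_of_nonneg_of_le_pi (abs_nonneg _) (by linarith) hΔ
    have hre : (1 + Real.exp w.re) / 2 ≤
        ((lam + Complex.exp w) * Complex.exp (-(ψ:ℂ) * Complex.I)).re := by
      rw [add_mul]
      have h1 : lam * Complex.exp (-(ψ:ℂ) * Complex.I) = 1 := by
        rw [hlam_def, ← Complex.exp_add]
        have he0 : (ψ:ℂ) * Complex.I + -(ψ:ℂ) * Complex.I = 0 := by ring
        rw [he0, Complex.exp_zero]
      have h2 : (Complex.exp w * Complex.exp (-(ψ:ℂ) * Complex.I))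
          = Complex.exp (w + -(ψ:ℂ)*Complex.I) := (Complex.exp_add _ _).symm
      rw [h1, h2, Complex.add_re, Complex.one_re, Complex.exp_re]
      have h3 : (w + -(ψ:ℂ)*Complex.I).re = w.re := by simp
      have h4 : (w + -(ψ:ℂ)*Complex.I).im = w.im - ψ := by simp; ring
      rw [h3, h4]
      nlinarith [Real.exp_pos w.re]
    calc (1 + Real.exp w.re) / 2
        ≤ ((lam + Complex.exp w) * Complex.exp (-(ψ:ℂ) * Complex.I)).re := hre
      _ ≤ ‖(lam + Complex.exp w) * Complex.exp (-(ψ:ℂ) * Complex.I)‖ :=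
          Complex.re_le_norm _
      _ = ‖lam + Complex.exp w‖ := by
          rw [norm_mul, Complex.norm_exp]
          simp
  set H : ℂ → ℂ := fun w => g (Complex.exp w) / (lam + Complex.exp w) ^ N with hH_def
  set Cb : ℝ := C' * (2 * M1) ^ N with hCb_def
  have hCb0 : 0 < Cb := by positivity
  have hbdry : ∀ γ : ℝ, (∃ k : ℤ, (p : ℝ) * γ = k * (2 * Real.pi)) → α ≤ γ → γ ≤ β →
      ∀ w : ℂ, w.im = γ → ‖H w‖ ≤ Cb := by
    intro γ hγ hγα hγβ w hw
    set x : ℝ := Real.exp w.re with hx_def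
    have hx : 0 < x := Real.exp_pos _
    have hgw : g (Complex.exp w) = g ((x : ℂ)) := hgp _ _ (hrot γ hγ w hw)
    have hgx : ‖g ((x:ℂ))‖ ≤ C' * (M1 * (1 + x)) ^ N := hgreal x hx.le
    have hd : (1 + x) / 2 ≤ ‖lam + Complex.exp w‖ :=
      hden w (by rw [hw]; exact hγα) (by rw [hw]; exact hγβ)
    have hd0 : (0:ℝ) < (1 + x) / 2 := by linarith
    have h1x : (1 + x) ≠ 0 := by linarith
    rw [hH_def]
    simp only
    rw [norm_div, norm_pow, hgw]
    calc ‖g ((x:ℂ))‖ / ‖lam + Complex.exp w‖ ^ N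
        ≤ (C' * (M1 * (1 + x)) ^ N) / (((1 + x)/2) ^ N) := by
          apply div_le_div₀ (by positivity) hgx (by positivity)
          exact pow_le_pow_left₀ hd0.le hd N
      _ = C' * ((M1 * (1 + x)) / ((1 + x)/2)) ^ N := by rw [mul_div_assoc, ← div_pow]
      _ = Cb := by
          rw [hCb_def]
          congr 2
          field_simp
  have hPL : ∀ w : ℂ, α ≤ w.im → w.im ≤ β → ‖H w‖ ≤ Cb := by
    intro w₀ hwa₀ hwb₀
    apply PhragmenLindelof.horizontal_strip (a := α) (b := β) ?_ ?_ ?_ ?_ hwa₀ hwb₀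
    · -- DiffContOnCl
      have hHd : ∀ w : ℂ, α ≤ w.im → w.im ≤ β → DifferentiableAt ℂ H w := by
        intro w hwa hwb
        have hne : lam + Complex.exp w ≠ 0 := by
          intro h0
          have hd := hden w hwa hwb
          rw [h0] at hd
          simp only [norm_zero] at hd
          nlinarith [Real.exp_pos w.re]
        have h1 : DifferentiableAt ℂ (fun w => g (Complex.exp w)) w :=
          (hgdiff (Complex.exp w)).comp w Complex.differentiable_exp.differentiableAt
        have h2 : DifferentiableAt ℂ (fun w => (lam + Complex.exp w) ^ N) w :=
          (((differentiable_const lam).add Complex.differentiable_exp).pow N).differentiableAt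
        exact h1.div h2 (pow_ne_zero N hne)
      constructor
      · intro w hw
        exact (hHd w (le_of_lt hw.1) (le_of_lt hw.2)).differentiableWithinAt
      · intro w hw
        have hw' : w ∈ Complex.im ⁻¹' Set.Icc α β := by
          have hsub : closure (Complex.im ⁻¹' Set.Ioo α β) ⊆ Complex.im ⁻¹' Set.Icc α β :=
            closure_minimal (Set.preimage_mono Set.Ioo_subset_Icc_self)
              (isClosed_Icc.preimage Complex.continuous_im)
          exact hsub hw
        exact (hHd w hw'.1 hw'.2).continuousAt.continuousWithinAt
    · -- growth hypothesis
      refine ⟨1, ?_, κ, ?_⟩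
      · rw [hβα, show Real.pi / (2 * Real.pi / p) = (p : ℝ) / 2 by field_simp]
        linarith
      · apply Asymptotics.IsBigO.of_bound (2 ^ N)
        rw [Filter.eventually_inf_principal]
        apply Filter.Eventually.of_forall
        intro w hw
        have hwa : α ≤ w.im := le_of_lt hw.1
        have hwb : w.im ≤ β := le_of_lt hw.2
        have hd := hden w hwa hwb
        have h12 : (1:ℝ)/2 ≤ ‖lam + Complex.exp w‖ := by
          nlinarith [Real.exp_pos w.re]
        rw [hH_def]
        simp only
        rw [norm_div, norm_pow]
        have hnum : ‖g (Complex.exp w)‖ ≤ Real.exp (κ * Real.exp w.re) := by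
          have hx := hgrow (Complex.exp w)
          rwa [Complex.norm_exp] at hx
        have hden2 : ((1:ℝ)/2) ^ N ≤ ‖lam + Complex.exp w‖ ^ N :=
          pow_le_pow_left₀ (by norm_num) h12 N
        calc ‖g (Complex.exp w)‖ / ‖lam + Complex.exp w‖ ^ N
            ≤ Real.exp (κ * Real.exp w.re) / ((1:ℝ)/2) ^ N :=
              div_le_div₀ (Real.exp_pos _).le hnum (by positivity) hden2
          _ = 2 ^ N * Real.exp (κ * Real.exp w.re) := by
              rw [one_div, inv_pow]
              field_simp
          _ ≤ 2 ^ N * ‖Real.exp (κ * Real.exp (1 * |w.re|))‖ := by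
              rw [one_mul, Real.norm_eq_abs, Real.abs_exp]
              gcongr
              exact le_abs_self _
    · exact fun z hz => hbdry α hkα le_rfl hαβ.le z hz
    · exact fun z hz => hbdry β hkβ hαβ.le le_rfl z hz
  -- endgame
  set J : ℕ := N + 1 with hJ_def
  set K : ℝ := Cb * 2 ^ N * m J / a ^ J with hK_def
  set t : ℝ := max 1 (K + 1) with ht_def
  have ht1 : 1 ≤ t := le_max_left _ _
  have htK : K + 1 ≤ t := le_max_right _ _
  have ht0 : 0 < t := lt_of_lt_of_le one_pos ht1
  set w : ℂ := ((Real.log t : ℝ) : ℂ) + (θ : ℂ) * Complex.I with hw_def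
  have hwim : w.im = θ := by simp [hw_def]
  have hexpw : Complex.exp w = (t : ℂ) * ω := by
    rw [hw_def, Complex.exp_add, hω_def]
    congr 1
    rw [← Complex.ofReal_exp]
    norm_cast
    exact Real.exp_log ht0
  have hH := hPL w (by rw [hwim]; exact hθα) (by rw [hwim]; exact hθβ)
  have habs_le : ‖lam + (t:ℂ) * ω‖ ≤ 1 + t := by
    calc ‖lam + (t:ℂ) * ω‖
        ≤ ‖lam‖ + ‖(t:ℂ) * ω‖ := norm_add_le _ _
      _ = 1 + t := by
          rw [hlam1, norm_mul, hωabs, Complex.norm_real, Real.norm_eq_abs, abs_of_pos ht0, mul_one]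
  have hup : ‖g ((t:ℂ) * ω)‖ ≤ Cb * (1 + t) ^ N := by
    have hdpos : 0 < ‖lam + Complex.exp w‖ := by
      have hd := hden w (by rw [hwim]; exact hθα) (by rw [hwim]; exact hθβ)
      nlinarith [Real.exp_pos w.re]
    have h1 : ‖g (Complex.exp w)‖ = ‖H w‖ * ‖lam + Complex.exp w‖ ^ N := by
      rw [hH_def]
      simp only
      rw [norm_div, norm_pow, div_mul_cancel₀]
      positivity
    rw [← hexpw, h1]
    apply mul_le_mul hH ?_ (by positivity) hCb0.le
    exact pow_le_pow_left₀ (norm_nonneg _) (hexpw ▸ habs_le) N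
  have hsumr : Summable (fun j : ℕ => (t ^ p * a) ^ j / m j) := by
    refine Summable.of_nonneg_of_le (fun j => div_nonneg (by positivity) (hmpos j).le)
      (fun j => hterm_le t ht0.le j) (aux_summable hp0 (t ^ p * a / c) (by positivity))
  have hgt : g ((t:ℂ) * ω) = (((∑' j : ℕ, (t ^ p * a) ^ j / m j : ℝ)) : ℂ) := by
    rw [Complex.ofReal_tsum, hg_def]
    simp only
    apply tsum_congr
    intro j
    have hb : ((t:ℂ) * ω) ^ p * A = ((t ^ p * a : ℝ) : ℂ) := by
      rw [mul_pow, mul_assoc, hωpA]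
      push_cast
      ring
    rw [hb]
    push_cast
    ring
  have hS0 : 0 ≤ ∑' j : ℕ, (t ^ p * a) ^ j / m j :=
    tsum_nonneg (fun j => div_nonneg (by positivity) (hmpos j).le)
  have hlow : (t ^ p * a) ^ J / m J ≤ ‖g ((t:ℂ) * ω)‖ := by
    rw [hgt, Complex.norm_real, Real.norm_eq_abs, _root_.abs_of_nonneg hS0]
    exact Summable.le_tsum hsumr J (fun j _ => div_nonneg (by positivity) (hmpos j).le)
  have hcomb : (t ^ p * a) ^ J / m J ≤ Cb * 2 ^ N * t ^ N := by
    have h2t : (1 + t) ^ N ≤ (2 * t) ^ N := pow_le_pow_left₀ (by linarith) (by linarith) N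
    calc (t ^ p * a) ^ J / m J ≤ Cb * (1 + t) ^ N := le_trans hlow hup
      _ ≤ Cb * (2 * t) ^ N := mul_le_mul_of_nonneg_left h2t hCb0.le
      _ = Cb * 2 ^ N * t ^ N := by rw [mul_pow]; ring
  have hfin2 : t ^ (p * J) * a ^ J ≤ Cb * 2 ^ N * m J * t ^ N := by
    have h := hcomb
    rw [mul_pow, ← pow_mul, div_le_iff₀ (hmpos J)] at h
    exact le_of_le_of_eq h (by ring)
  have hNpJ : N + 1 ≤ p * J := by
    have h1 : J ≤ p * J := Nat.le_mul_of_pos_left J hp0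
    omega
  have hKt : t * (t ^ N * a ^ J) ≤ K * (t ^ N * a ^ J) := by
    have he : K * (t ^ N * a ^ J) = Cb * 2 ^ N * m J * t ^ N := by
      rw [hK_def]
      field_simp
    rw [he]
    calc t * (t ^ N * a ^ J) = t ^ (N + 1) * a ^ J := by ring
      _ ≤ t ^ (p * J) * a ^ J :=
          mul_le_mul_of_nonneg_right (pow_le_pow_right₀ ht1 hNpJ) (by positivity)
      _ ≤ Cb * 2 ^ N * m J * t ^ N := hfin2
  have ht_le : t ≤ K := le_of_mul_le_mul_right hKt (by positivity)
  linarith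
end

section
/- Consequently (Theorem on higher-order operators): if p > 2, P(∂_z) is a homogeneous constant-coefficient operator of order p with P(−i,…,−i) ≠ 0, and m is a function of order p, then there is no finite complex Borel measure μ of compact support on ℝⁿ such that ∫_{ℝⁿ} φ(z+ty) dμ(y) = Σ_{j=0}^∞ (P^j(∂_z)φ)(z) t^{pj}/m(j) holds for all polynomials φ, all z and all small t. -/
open MeasureTheory MvPolynomial

/-- The monomial derivative `∂^α` on polynomials. -/
noncomputable def mderiv {n : ℕ} (α : Fin n →₀ ℕ) (φ : MvPolynomial (Fin n) ℂ) :
    MvPolynomial (Fin n) ℂ :=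
  (List.finRange n).foldr (fun k ψ => (fun χ => MvPolynomial.pderiv k χ)^[α k] ψ) φ

/-- The constant-coefficient operator `P(∂_z)` on polynomials, for a polynomial symbol `P`. -/
noncomputable def polyOp {n : ℕ} (P : MvPolynomial (Fin n) ℂ)
    (φ : MvPolynomial (Fin n) ℂ) : MvPolynomial (Fin n) ℂ :=
  ∑ α ∈ P.support, P.coeff α • mderiv α φ

/-- The integral of a complex-valued function against the complex measure
`μ₁ - μ₂ + i(μ₃ - μ₄)`. -/
noncomputable def cInt {n : ℕ} (μ₁ μ₂ μ₃ μ₄ : Measure (Fin n → ℝ))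
    (f : (Fin n → ℝ) → ℂ) : ℂ :=
  (∫ y, f y ∂μ₁) - (∫ y, f y ∂μ₂) + Complex.I * ((∫ y, f y ∂μ₃) - (∫ y, f y ∂μ₄))

set_option maxHeartbeats 1000000

lemma Nat.descFactorial_add' (n a b : ℕ) :
    n.descFactorial (a + b) = n.descFactorial a * (n - a).descFactorial b := by
  induction b with
  | zero => simp
  | succ b ih =>
      rw [← Nat.add_assoc, Nat.descFactorial_succ, ih, Nat.descFactorial_succ, Nat.sub_sub]
      ring

section alg

variable {n : ℕ}

noncomputable def sPoly (n : ℕ) : MvPolynomial (Fin n) ℂ := ∑ k, X k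

lemma pderiv_sPoly (k : Fin n) : pderiv k (sPoly n) = 1 := by
  classical
  rw [sPoly, map_sum]
  rw [Finset.sum_eq_single k]
  · simp [pderiv_X]
  · intro b _ hb; simp [pderiv_X, Pi.single_apply, hb.symm]
  · simp

lemma pderiv_sPoly_pow (k : Fin n) (M : ℕ) :
    pderiv k ((sPoly n) ^ M) = M • (sPoly n) ^ (M - 1) := by
  rw [(pderiv k).leibniz_pow, pderiv_sPoly, smul_eq_mul, mul_one]

lemma iter_pderiv_sPoly_pow (k : Fin n) (a M : ℕ) :
    (fun χ => pderiv k χ)^[a] ((sPoly n) ^ M)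
      = (M.descFactorial a : ℂ) • (sPoly n) ^ (M - a) := by
  induction a with
  | zero => simp
  | succ a ih =>
      rw [Function.iterate_succ_apply', ih, Derivation.map_smul, pderiv_sPoly_pow,
        Nat.descFactorial_succ, Nat.sub_sub, ← Nat.cast_smul_eq_nsmul ℂ, smul_smul]
      push_cast
      ring_nf

lemma iter_pderiv_smul (k : Fin n) (a : ℕ) (c : ℂ) (φ : MvPolynomial (Fin n) ℂ) :
    (fun χ => pderiv k χ)^[a] (c • φ) = c • (fun χ => pderiv k χ)^[a] φ := by
  induction a generalizing φ with
  | zero => rfl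
  | succ a ih => rw [Function.iterate_succ_apply, Derivation.map_smul, ih, Function.iterate_succ_apply]

lemma foldr_pderiv_sPoly_pow (α : Fin n →₀ ℕ) (l : List (Fin n)) (M : ℕ) :
    l.foldr (fun k ψ => (fun χ => pderiv k χ)^[α k] ψ) ((sPoly n) ^ M)
      = (M.descFactorial ((l.map α).sum) : ℂ) • (sPoly n) ^ (M - (l.map α).sum) := by
  induction l with
  | nil => simp
  | cons k l ih =>
      rw [List.foldr_cons, ih, iter_pderiv_smul, iter_pderiv_sPoly_pow]
      rw [smul_smul, List.map_cons, List.sum_cons]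
      rw [show α k + (l.map α).sum = (l.map α).sum + α k from Nat.add_comm _ _,
        Nat.descFactorial_add', Nat.sub_sub]
      push_cast
      ring_nf

lemma mderiv_sPoly_pow (α : Fin n →₀ ℕ) (M : ℕ) :
    mderiv α ((sPoly n) ^ M)
      = (M.descFactorial (∑ k, α k) : ℂ) • (sPoly n) ^ (M - ∑ k, α k) := by
  rw [mderiv, foldr_pderiv_sPoly_pow, ← Fin.sum_univ_def]

end alg

section polyop

variable {n p : ℕ} {P : MvPolynomial (Fin n) ℂ}

lemma weight_eq (hP : P.IsHomogeneous p) {α : Fin n →₀ ℕ} (hα : α ∈ P.support) :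
    ∑ k, α k = p := by
  have h1 : (Finsupp.weight 1) α = p := hP (MvPolynomial.mem_support_iff.mp hα)
  rw [← h1, Finsupp.weight_apply, Finsupp.sum]
  simp only [Pi.one_apply, smul_eq_mul, mul_one]
  exact (Finset.sum_subset (Finset.subset_univ _)
    (fun x _ hx => Finsupp.notMem_support_iff.mp hx)).symm

lemma mderiv_smul {α : Fin n →₀ ℕ} (c : ℂ) (φ : MvPolynomial (Fin n) ℂ) :
    mderiv α (c • φ) = c • mderiv α φ := by
  rw [mderiv, mderiv]
  induction (List.finRange n) with
  | nil => rfl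
  | cons k l ih => rw [List.foldr_cons, List.foldr_cons, ih, iter_pderiv_smul]

lemma polyOp_smul (c : ℂ) (φ : MvPolynomial (Fin n) ℂ) :
    polyOp P (c • φ) = c • polyOp P φ := by
  rw [polyOp, polyOp, Finset.smul_sum]
  exact Finset.sum_congr rfl fun α _ => by rw [mderiv_smul, smul_comm]

lemma polyOp_sPoly_pow (hP : P.IsHomogeneous p) (M : ℕ) :
    polyOp P ((sPoly n) ^ M)
      = ((MvPolynomial.eval (fun _ => (1:ℂ)) P) * (M.descFactorial p : ℂ))
          • (sPoly n) ^ (M - p) := by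
  rw [polyOp]
  have h : ∀ α ∈ P.support, P.coeff α • mderiv α ((sPoly n) ^ M)
      = (P.coeff α * (M.descFactorial p : ℂ)) • (sPoly n) ^ (M - p) := by
    intro α hα
    rw [mderiv_sPoly_pow, weight_eq hP hα, smul_smul]
  rw [Finset.sum_congr rfl h, ← Finset.sum_smul]
  congr 1
  rw [MvPolynomial.eval_eq', Finset.sum_mul]
  simp

lemma iter_polyOp_sPoly_pow (hP : P.IsHomogeneous p) (N j : ℕ) :
    (polyOp P)^[j] ((sPoly n) ^ N)
      = ((MvPolynomial.eval (fun _ => (1:ℂ)) P) ^ j * (N.descFactorial (p * j) : ℂ))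
          • (sPoly n) ^ (N - p * j) := by
  induction j with
  | zero => simp
  | succ j ih =>
      rw [Function.iterate_succ_apply', ih, polyOp_smul, polyOp_sPoly_pow hP,
        smul_smul, Nat.mul_succ, Nat.descFactorial_add', Nat.sub_sub]
      push_cast
      ring_nf

lemma eval_zero_sPoly_pow (M : ℕ) :
    MvPolynomial.eval (fun _ => (0:ℂ)) ((sPoly n) ^ M) = if M = 0 then 1 else 0 := by
  rw [map_pow]
  have : MvPolynomial.eval (fun _ => (0:ℂ)) (sPoly n) = 0 := by
    simp [sPoly]
  rw [this]
  cases M with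
  | zero => simp
  | succ M => simp

lemma eval_zero_iter_polyOp (hP : P.IsHomogeneous p) (N j : ℕ) :
    MvPolynomial.eval (fun _ => (0:ℂ)) ((polyOp P)^[j] ((sPoly n) ^ N))
      = if p * j = N then (MvPolynomial.eval (fun _ => (1:ℂ)) P) ^ j * (N.factorial : ℂ)
        else 0 := by
  rw [iter_polyOp_sPoly_pow hP, MvPolynomial.smul_eval, eval_zero_sPoly_pow]
  by_cases hc : p * j = N
  · rw [if_pos (show N - p * j = 0 by omega), if_pos hc, hc, Nat.descFactorial_self]
    ring
  · rw [if_neg hc]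
    rcases Nat.lt_or_ge N (p * j) with h | h
    · rw [Nat.descFactorial_eq_zero_iff_lt.mpr h]
      push_cast
      ring
    · rw [if_neg (show ¬ N - p * j = 0 by omega)]
      ring

lemma eval_const_of_homog (hP : P.IsHomogeneous p) (c : ℂ) :
    MvPolynomial.eval (fun _ => c) P = c ^ p * MvPolynomial.eval (fun _ => (1:ℂ)) P := by
  rw [MvPolynomial.eval_eq', MvPolynomial.eval_eq', Finset.mul_sum]
  apply Finset.sum_congr rfl
  intro d hd
  rw [Finset.prod_pow_eq_pow_sum, weight_eq hP hd]
  simp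
  ring

end polyop

section CX
open Complex Set Filter Asymptotics
local notation "π" => Real.pi

lemma pl_sector {H : ℂ → ℂ} (hdiff : Differentiable ℂ H) {A S K β : ℝ} (hβ0 : 0 < β)
    (hβ : β < π / 2)
    (hgrow : ∀ ζ : ℂ, ‖H ζ‖ ≤ A * Real.exp (S * ‖ζ‖))
    {d : ℂ} (hd1 : ‖d‖ = 1)
    (h₁ : ∀ r : ℝ, 0 < r → ‖H ((r : ℂ) * d * Complex.exp (β * Complex.I))‖ ≤ K)
    (h₂ : ∀ r : ℝ, 0 < r → ‖H ((r : ℂ) * d * Complex.exp (-β * Complex.I))‖ ≤ K) :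
    ∀ (r θ : ℝ), 0 < r → |θ| ≤ β →
      ‖H ((r : ℂ) * d * Complex.exp (θ * Complex.I))‖ ≤ K := by
  intro r θ hr hθ
  have hexp : ∀ (x y : ℝ), Complex.exp ((x : ℂ) + y * Complex.I)
      = (Real.exp x : ℂ) * Complex.exp (y * Complex.I) := by
    intro x y
    rw [Complex.exp_add, Complex.ofReal_exp]
  have key := PhragmenLindelof.horizontal_strip (a := -β) (b := β) (C := K)
    (f := fun w => H (Complex.exp w * d)) (z := (Real.log r : ℂ) + θ * Complex.I)
    ?_ ?_ ?_ ?_ ?_ ?_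
  · have : Complex.exp ((Real.log r : ℂ) + θ * Complex.I) * d
        = (r : ℂ) * d * Complex.exp (θ * Complex.I) := by
      rw [hexp, Real.exp_log hr]; ring
    simpa [this] using key
  · exact ((hdiff.comp (Complex.differentiable_exp.mul_const d))).diffContOnCl
  · refine ⟨1, ?_, max S 0, ?_⟩
    · rw [sub_neg_eq_add, ← two_mul]
      rw [lt_div_iff₀ (by positivity)]
      linarith
    · apply IsBigO.of_bound (max A 1)
      apply Eventually.of_forall
      intro w
      have h1 : ‖H (Complex.exp w * d)‖ ≤ A * Real.exp (S * Real.exp w.re) := by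
        simpa [Complex.norm_exp, hd1] using hgrow (Complex.exp w * d)
      have h2 : S * Real.exp w.re ≤ max S 0 * Real.exp |w.re| := by
        rcases le_total S 0 with hS | hS
        · have : S * Real.exp w.re ≤ 0 := mul_nonpos_of_nonpos_of_nonneg hS (Real.exp_nonneg _)
          exact this.trans (by positivity)
        · calc S * Real.exp w.re ≤ S * Real.exp |w.re| := by
                apply mul_le_mul_of_nonneg_left (Real.exp_le_exp.mpr (le_abs_self _)) hS
            _ ≤ max S 0 * Real.exp |w.re| := by
                apply mul_le_mul_of_nonneg_right (le_max_left _ _) (Real.exp_nonneg _)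
      have h3 : A * Real.exp (S * Real.exp w.re)
          ≤ max A 1 * Real.exp (max S 0 * Real.exp (1 * |w.re|)) := by
        rw [one_mul]
        calc A * Real.exp (S * Real.exp w.re)
            ≤ max A 1 * Real.exp (S * Real.exp w.re) := by
              apply mul_le_mul_of_nonneg_right (le_max_left _ _) (Real.exp_nonneg _)
          _ ≤ max A 1 * Real.exp (max S 0 * Real.exp |w.re|) := by
              apply mul_le_mul_of_nonneg_left (Real.exp_le_exp.mpr h2)
                (le_trans zero_le_one (le_max_right _ _))
      calc ‖H (Complex.exp w * d)‖ ≤ A * Real.exp (S * Real.exp w.re) := h1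
        _ ≤ max A 1 * Real.exp (max S 0 * Real.exp (1 * |w.re|)) := h3
        _ = max A 1 * ‖Real.exp (max S 0 * Real.exp (1 * |w.re|))‖ := by
              rw [Real.norm_eq_abs, abs_of_pos (Real.exp_pos _)]
  · intro w hw
    have hw' : w = (w.re : ℂ) + (-β : ℝ) * Complex.I := by
      rw [← hw]; exact (Complex.re_add_im w).symm
    show ‖H (Complex.exp w * d)‖ ≤ K
    rw [hw', hexp]
    have := h₂ (Real.exp w.re) (Real.exp_pos _)
    have heq : (↑(Real.exp w.re) : ℂ) * Complex.exp (↑(-β : ℝ) * Complex.I) * d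
        = ↑(Real.exp w.re) * d * Complex.exp (-↑β * Complex.I) := by push_cast; ring
    rw [heq]; exact this
  · intro w hw
    have hw' : w = (w.re : ℂ) + (β : ℝ) * Complex.I := by
      rw [← hw]; exact (Complex.re_add_im w).symm
    show ‖H (Complex.exp w * d)‖ ≤ K
    rw [hw', hexp]
    have := h₁ (Real.exp w.re) (Real.exp_pos _)
    have heq : (↑(Real.exp w.re) : ℂ) * Complex.exp (↑(β : ℝ) * Complex.I) * d
        = ↑(Real.exp w.re) * d * Complex.exp (↑β * Complex.I) := by push_cast; ring
    rw [heq]; exact this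
  · simp only [Complex.add_im, Complex.ofReal_im, Complex.mul_im, Complex.ofReal_re,
      Complex.I_im, Complex.I_re, mul_zero, mul_one, zero_add, add_zero]
    linarith [abs_le.mp hθ]
  · simp only [Complex.add_im, Complex.ofReal_im, Complex.mul_im, Complex.ofReal_re,
      Complex.I_im, Complex.I_re, mul_zero, mul_one, zero_add, add_zero]
    linarith [abs_le.mp hθ]

lemma exp_pi_div_two_mul_I' : Complex.exp ((↑(π/2) : ℂ) * Complex.I) = Complex.I := by
  rw [Complex.exp_mul_I, ← Complex.ofReal_cos, ← Complex.ofReal_sin,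
    Real.cos_pi_div_two, Real.sin_pi_div_two]
  simp

lemma bounded_of_rays {H : ℂ → ℂ} (hdiff : Differentiable ℂ H) {p : ℕ} (hp : 2 < p)
    {A S K : ℝ}
    (hgrow : ∀ ζ : ℂ, ‖H ζ‖ ≤ A * Real.exp (S * ‖ζ‖))
    (hsym : ∀ ζ : ℂ, H (Complex.exp (2 * π * Complex.I / p) * ζ) = H ζ)
    (hray : ∀ x : ℝ, ‖H ((x : ℂ) * Complex.I)‖ ≤ K) :
    ∀ ζ : ℂ, ‖H ζ‖ ≤ K := by
  have hp0 : (0:ℝ) < p := by exact_mod_cast Nat.zero_lt_of_lt hp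
  have hπ := Real.pi_pos
  have hsymn : ∀ (k : ℕ) (ζ : ℂ),
      H (Complex.exp (2 * π * Complex.I * k / p) * ζ) = H ζ := by
    intro k
    induction k with
    | zero => intro ζ; simp
    | succ k ih =>
        intro ζ
        have hsplit : (2 * (π:ℂ) * Complex.I * (k+1 : ℕ) / p)
            = 2 * π * Complex.I / p + 2 * π * Complex.I * k / p := by
          push_cast; ring
        rw [hsplit, Complex.exp_add, mul_assoc, hsym, ih]
  set β := π / p with hβdef
  have hβ0 : 0 < β := by positivity
  have hβ : β < π / 2 := by
    rw [hβdef]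
    apply div_lt_div_of_pos_left hπ (by norm_num) (by exact_mod_cast hp)
  set d := Complex.exp ((↑(π/2 + β) : ℂ) * Complex.I) with hddef
  have hd1 : ‖d‖ = 1 := by
    rw [hddef, Complex.norm_exp]
    simp
  have hsector : ∀ (r δ : ℝ), 0 < r → π/2 ≤ δ → δ ≤ π/2 + 2*β →
      ‖H ((r:ℂ) * Complex.exp ((δ:ℝ) * Complex.I))‖ ≤ K := by
    intro r δ hr h1 h2
    have hmain := pl_sector (K := K) hdiff hβ0 hβ hgrow hd1 ?_ ?_ r (δ - (π/2 + β)) hr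
      (by rw [abs_le]; constructor <;> linarith)
    · have heq : (r:ℂ) * d * Complex.exp (↑(δ - (π/2 + β)) * Complex.I)
          = (r:ℂ) * Complex.exp ((δ:ℝ) * Complex.I) := by
        rw [hddef, mul_assoc, ← Complex.exp_add]
        congr 2
        push_cast
        ring
      rwa [heq] at hmain
    · -- boundary ray at angle π/2 + 2β
      intro r' hr'
      have hpc : (p:ℂ) ≠ 0 := by
        exact_mod_cast (show (p:ℝ) ≠ 0 from hp0.ne')
      have e1 : Complex.exp (2 * π * Complex.I / p) * ((r':ℂ) * Complex.I)
          = (r':ℂ) * Complex.exp (↑(π/2 + 2*β) * Complex.I) := by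
        calc Complex.exp (2 * π * Complex.I / p) * ((r':ℂ) * Complex.I)
            = (r':ℂ) * (Complex.exp (2 * π * Complex.I / p)
                * Complex.exp ((↑(π/2) : ℂ) * Complex.I)) := by
              rw [exp_pi_div_two_mul_I']; ring
          _ = (r':ℂ) * Complex.exp (2 * π * Complex.I / p + (↑(π/2) : ℂ) * Complex.I) := by
              rw [Complex.exp_add]
          _ = (r':ℂ) * Complex.exp (↑(π/2 + 2*β) * Complex.I) := by
              congr 2
              rw [hβdef]
              push_cast
              field_simp
              ring
      have e2 : (r':ℂ) * d * Complex.exp (↑β * Complex.I)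
          = (r':ℂ) * Complex.exp (↑(π/2 + 2*β) * Complex.I) := by
        rw [hddef, mul_assoc, ← Complex.exp_add]
        congr 2
        push_cast
        ring
      rw [e2, ← e1, hsym]
      exact hray r'
    · -- boundary ray at angle π/2
      intro r' hr'
      have heq : (r':ℂ) * d * Complex.exp (-↑β * Complex.I)
          = (r':ℂ) * Complex.I := by
        calc (r':ℂ) * d * Complex.exp (-↑β * Complex.I)
            = (r':ℂ) * Complex.exp ((↑(π/2 + β) : ℂ) * Complex.I + (-↑β) * Complex.I) := by
              rw [hddef, mul_assoc, ← Complex.exp_add]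
          _ = (r':ℂ) * Complex.exp ((↑(π/2) : ℂ) * Complex.I) := by
              congr 2
              push_cast
              ring
          _ = (r':ℂ) * Complex.I := by rw [exp_pi_div_two_mul_I']
      rw [heq]
      exact hray r'
  intro ζ
  by_cases hζ : ζ = 0
  · subst hζ
    simpa using hray 0
  · set θ := Complex.arg ζ with hθdef
    have hr : 0 < ‖ζ‖ := norm_pos_iff.mpr hζ
    set r := ‖ζ‖ with hrdef
    set x : ℝ := (π/2 - θ) * p / (2*π) with hxdef
    set k : ℤ := ⌈x⌉ + p with hkdef
    have hθub : θ ≤ π := Complex.arg_le_pi ζ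
    have hθlb : -π < θ := Complex.neg_pi_lt_arg ζ
    have hxlb : -(p:ℝ) ≤ x := by
      rw [hxdef, le_div_iff₀ (by positivity)]
      nlinarith [mul_nonneg (show (0:ℝ) ≤ π/2 - θ + 2*π by linarith) hp0.le]
    have hk0 : 0 ≤ k := by
      have h1 : (-(p:ℤ) : ℝ) ≤ (⌈x⌉ : ℝ) := by
        push_cast
        linarith [Int.le_ceil x]
      have h2 : -(p:ℤ) ≤ ⌈x⌉ := by exact_mod_cast h1
      rw [hkdef]
      omega
    set K' : ℕ := k.toNat with hK'def
    have hK'k : (K' : ℤ) = k := Int.toNat_of_nonneg hk0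
    have hK'r : (K' : ℝ) = (⌈x⌉ : ℝ) + p := by
      have : ((K' : ℤ) : ℝ) = ((⌈x⌉ + p : ℤ) : ℝ) := by rw [hK'k, hkdef]
      push_cast at this
      push_cast
      linarith
    set δ : ℝ := θ + 2*π*K'/p - 2*π with hδdef
    have hxval : 2*π*x/p = π/2 - θ := by
      rw [hxdef]
      field_simp
    have hδeq : δ = θ + 2*π*(⌈x⌉:ℝ)/p := by
      rw [hδdef, hK'r]
      field_simp
      ring
    have hδ1 : π/2 ≤ δ := by
      rw [hδeq]
      have : 2*π*x/p ≤ 2*π*(⌈x⌉:ℝ)/p := by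
        gcongr
        exact Int.le_ceil x
      linarith [hxval ▸ this]
    have hδ2 : δ ≤ π/2 + 2*β := by
      rw [hδeq, hβdef]
      have h3 : 2*π*(⌈x⌉:ℝ)/p ≤ 2*π*(x+1)/p := by
        gcongr
        exact le_of_lt (Int.ceil_lt_add_one x)
      have h2 : 2*π*(x+1)/(p:ℝ) = 2*π*x/p + 2*π/p := by ring
      have e1 : 2*(π/(p:ℝ)) = 2*π/p := by ring
      linarith [hxval]
    have hζeq : Complex.exp (2*π*Complex.I*K'/p) * ζ
        = (r:ℂ) * Complex.exp ((δ:ℝ) * Complex.I) := by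
      conv_lhs => rw [← Complex.norm_mul_exp_arg_mul_I ζ]
      rw [show Complex.exp (2*π*Complex.I*K'/p) * (((‖ζ‖ : ℝ) : ℂ) * Complex.exp (↑(Complex.arg ζ)*Complex.I))
          = ((‖ζ‖ : ℝ) : ℂ) * Complex.exp (2*π*Complex.I*(K':ℂ)/p + ↑(Complex.arg ζ)*Complex.I) by
        rw [Complex.exp_add]; ring]
      rw [← hrdef, ← hθdef]
      congr 1
      have hexpo : 2*(π:ℂ)*Complex.I*(K':ℂ)/p + (θ:ℂ)*Complex.I
          = (δ:ℝ) * Complex.I + 2*π*Complex.I := by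
        rw [hδdef]
        push_cast
        have hpne : (p:ℂ) ≠ 0 := by exact_mod_cast hp0.ne'
        field_simp
        ring
      rw [hexpo, Complex.exp_add, Complex.exp_two_pi_mul_I, mul_one]
    calc ‖H ζ‖ = ‖H (Complex.exp (2*π*Complex.I*K'/p) * ζ)‖ := by rw [hsymn K' ζ]
      _ = ‖H ((r:ℂ) * Complex.exp ((δ:ℝ) * Complex.I))‖ := by rw [hζeq]
      _ ≤ K := hsector r δ hr hδ1 hδ2

end CX

lemma cexp_eq_tsum (z : ℂ) : Complex.exp z = ∑' N : ℕ, z ^ N / N.factorial := by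
  rw [Complex.exp_eq_exp_ℂ, NormedSpace.exp_eq_tsum_div]

section meas

variable {n : ℕ} {R : ℝ}

lemma aux_ae_ball (μ : Measure (Fin n → ℝ)) (hs : μ (Metric.closedBall 0 R)ᶜ = 0) :
    ∀ᵐ y ∂μ, y ∈ Metric.closedBall (0 : Fin n → ℝ) R :=
  mem_ae_iff.mpr hs

lemma aux_integrable (μ : Measure (Fin n → ℝ)) [IsFiniteMeasure μ]
    (hs : μ (Metric.closedBall 0 R)ᶜ = 0) {f : (Fin n → ℝ) → ℂ} (hf : Continuous f)
    {D : ℝ} (hD : ∀ y ∈ Metric.closedBall (0 : Fin n → ℝ) R, ‖f y‖ ≤ D) :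
    Integrable f μ := by
  refine ⟨hf.aestronglyMeasurable, HasFiniteIntegral.of_bounded (C := D) ?_⟩
  filter_upwards [aux_ae_ball μ hs] with y hy using hD y hy

lemma aux_integral_norm_le (μ : Measure (Fin n → ℝ)) [IsFiniteMeasure μ]
    (hs : μ (Metric.closedBall 0 R)ᶜ = 0) {f : (Fin n → ℝ) → ℂ} (hf : Continuous f)
    {D : ℝ} (hD : ∀ y ∈ Metric.closedBall (0 : Fin n → ℝ) R, ‖f y‖ ≤ D) :
    ∫ y, ‖f y‖ ∂μ ≤ D * (μ Set.univ).toReal := by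
  have h := integral_mono_ae (aux_integrable μ hs hf hD).norm (integrable_const D)
    (by filter_upwards [aux_ae_ball μ hs] with y hy using hD y hy)
  simpa [integral_const, smul_eq_mul, mul_comm, measureReal_def] using h

lemma aux_norm_integral_le (μ : Measure (Fin n → ℝ)) [IsFiniteMeasure μ]
    (hs : μ (Metric.closedBall 0 R)ᶜ = 0) {f : (Fin n → ℝ) → ℂ} (hf : Continuous f)
    {D : ℝ} (hD : ∀ y ∈ Metric.closedBall (0 : Fin n → ℝ) R, ‖f y‖ ≤ D) :
    ‖∫ y, f y ∂μ‖ ≤ D * (μ Set.univ).toReal :=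
  le_trans (norm_integral_le_integral_norm f) (aux_integral_norm_le μ hs hf hD)

variable (μ₁ μ₂ μ₃ μ₄ : Measure (Fin n → ℝ))
  [IsFiniteMeasure μ₁] [IsFiniteMeasure μ₂] [IsFiniteMeasure μ₃] [IsFiniteMeasure μ₄]

lemma cInt_const_mul (c : ℂ) (f : (Fin n → ℝ) → ℂ) :
    cInt μ₁ μ₂ μ₃ μ₄ (fun y => c * f y) = c * cInt μ₁ μ₂ μ₃ μ₄ f := by
  simp only [cInt, MeasureTheory.integral_const_mul]
  ring

lemma cInt_norm_le
    (hs1 : μ₁ (Metric.closedBall 0 R)ᶜ = 0) (hs2 : μ₂ (Metric.closedBall 0 R)ᶜ = 0)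
    (hs3 : μ₃ (Metric.closedBall 0 R)ᶜ = 0) (hs4 : μ₄ (Metric.closedBall 0 R)ᶜ = 0)
    {f : (Fin n → ℝ) → ℂ} (hf : Continuous f)
    {D : ℝ} (hD : ∀ y ∈ Metric.closedBall (0 : Fin n → ℝ) R, ‖f y‖ ≤ D) :
    ‖cInt μ₁ μ₂ μ₃ μ₄ f‖ ≤ D * ((μ₁ Set.univ).toReal + (μ₂ Set.univ).toReal
      + (μ₃ Set.univ).toReal + (μ₄ Set.univ).toReal) := by
  have h1 := aux_norm_integral_le μ₁ hs1 hf hD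
  have h2 := aux_norm_integral_le μ₂ hs2 hf hD
  have h3 := aux_norm_integral_le μ₃ hs3 hf hD
  have h4 := aux_norm_integral_le μ₄ hs4 hf hD
  calc ‖cInt μ₁ μ₂ μ₃ μ₄ f‖
      ≤ ‖(∫ y, f y ∂μ₁) - (∫ y, f y ∂μ₂)‖
        + ‖Complex.I * ((∫ y, f y ∂μ₃) - (∫ y, f y ∂μ₄))‖ := norm_add_le _ _
    _ ≤ (‖∫ y, f y ∂μ₁‖ + ‖∫ y, f y ∂μ₂‖) + (‖∫ y, f y ∂μ₃‖ + ‖∫ y, f y ∂μ₄‖) := by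
        rw [norm_mul, Complex.norm_I, one_mul]
        exact add_le_add (norm_sub_le _ _) (norm_sub_le _ _)
    _ ≤ D * (μ₁ Set.univ).toReal + D * (μ₂ Set.univ).toReal
        + (D * (μ₃ Set.univ).toReal + D * (μ₄ Set.univ).toReal) := by
        exact add_le_add (add_le_add h1 h2) (add_le_add h3 h4)
    _ = D * ((μ₁ Set.univ).toReal + (μ₂ Set.univ).toReal
        + (μ₃ Set.univ).toReal + (μ₄ Set.univ).toReal) := by ring

lemma cInt_hasSum
    (hs1 : μ₁ (Metric.closedBall 0 R)ᶜ = 0) (hs2 : μ₂ (Metric.closedBall 0 R)ᶜ = 0)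
    (hs3 : μ₃ (Metric.closedBall 0 R)ᶜ = 0) (hs4 : μ₄ (Metric.closedBall 0 R)ᶜ = 0)
    (F : ℕ → (Fin n → ℝ) → ℂ) (hFc : ∀ N, Continuous (F N))
    (D : ℕ → ℝ) (hD : ∀ N, ∀ y ∈ Metric.closedBall (0 : Fin n → ℝ) R, ‖F N y‖ ≤ D N)
    (hDs : Summable D) :
    HasSum (fun N => cInt μ₁ μ₂ μ₃ μ₄ (F N))
      (cInt μ₁ μ₂ μ₃ μ₄ (fun y => ∑' N, F N y)) := by
  have key : ∀ (μ : Measure (Fin n → ℝ)) (_ : IsFiniteMeasure μ),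
      μ (Metric.closedBall 0 R)ᶜ = 0 →
      HasSum (fun N => ∫ y, F N y ∂μ) (∫ y, ∑' N, F N y ∂μ) := by
    intro μ hFin hs
    apply hasSum_integral_of_summable_integral_norm
      (fun N => aux_integrable μ hs (hFc N) (hD N))
    apply Summable.of_nonneg_of_le
      (fun N => integral_nonneg fun y => norm_nonneg _)
      (fun N => aux_integral_norm_le μ hs (hFc N) (hD N))
      (hDs.mul_right _)
  have h1 := key μ₁ inferInstance hs1
  have h2 := key μ₂ inferInstance hs2
  have h3 := key μ₃ inferInstance hs3
  have h4 := key μ₄ inferInstance hs4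
  exact ((h1.sub h2).add ((h3.sub h4).mul_left Complex.I))

lemma aux_diff (μ : Measure (Fin n → ℝ)) [IsFiniteMeasure μ] {S : ℝ}
    (hs : μ (Metric.closedBall 0 R)ᶜ = 0) (L : (Fin n → ℝ) → ℝ) (hL : Continuous L)
    (hS0 : 0 ≤ S)
    (hLb : ∀ y ∈ Metric.closedBall (0 : Fin n → ℝ) R, |L y| ≤ S) :
    Differentiable ℂ (fun ζ => ∫ y, Complex.exp (ζ * (L y : ℂ)) ∂μ) := by
  intro ζ₀
  have hre : ∀ (ζ : ℂ) (y : Fin n → ℝ), (ζ * (L y : ℂ)).re = ζ.re * L y := by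
    intro ζ y
    simp [Complex.mul_re]
  have hnorm : ∀ (ζ : ℂ) (y : Fin n → ℝ), ‖Complex.exp (ζ * (L y : ℂ))‖
      = Real.exp (ζ.re * L y) := by
    intro ζ y
    rw [Complex.norm_exp, hre]
  have hcont : ∀ ζ : ℂ, Continuous fun y => Complex.exp (ζ * (L y : ℂ)) := fun ζ =>
    Complex.continuous_exp.comp (continuous_const.mul (Complex.continuous_ofReal.comp hL))
  have main := hasDerivAt_integral_of_dominated_loc_of_deriv_le (μ := μ)
    (F := fun ζ y => Complex.exp (ζ * (L y : ℂ)))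
    (F' := fun ζ y => Complex.exp (ζ * (L y : ℂ)) * (L y : ℂ))
    (x₀ := ζ₀)
    (bound := fun _ => S * Real.exp ((‖ζ₀‖ + 1) * S)) (Metric.ball_mem_nhds ζ₀ one_pos)
    (Filter.Eventually.of_forall fun ζ => (hcont ζ).aestronglyMeasurable)
    ?_ ?_ ?_ (integrable_const _) ?_
  · exact main.2.differentiableAt
  · refine aux_integrable μ hs (hcont ζ₀) (D := Real.exp (‖ζ₀‖ * S)) ?_
    intro y hy
    rw [hnorm]
    apply Real.exp_le_exp.mpr
    calc ζ₀.re * L y ≤ |ζ₀.re * L y| := le_abs_self _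
      _ = |ζ₀.re| * |L y| := abs_mul _ _
      _ ≤ ‖ζ₀‖ * S := by
          apply mul_le_mul (Complex.abs_re_le_norm ζ₀) (hLb y hy) (abs_nonneg _)
            (norm_nonneg _)
  · exact ((hcont ζ₀).mul (Complex.continuous_ofReal.comp hL)).aestronglyMeasurable
  · filter_upwards [aux_ae_ball μ hs] with y hy
    intro ζ hζ
    have hζa : ‖ζ‖ ≤ ‖ζ₀‖ + 1 := by
      have := mem_ball_iff_norm.mp hζ
      calc ‖ζ‖ = ‖ζ₀ + (ζ - ζ₀)‖ := by rw [add_sub_cancel]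
        _ ≤ ‖ζ₀‖ + ‖ζ - ζ₀‖ := norm_add_le _ _
        _ ≤ ‖ζ₀‖ + 1 := add_le_add le_rfl this.le
    rw [norm_mul, hnorm]
    calc Real.exp (ζ.re * L y) * ‖(L y : ℂ)‖
        = Real.exp (ζ.re * L y) * |L y| := by rw [Complex.norm_real, Real.norm_eq_abs]
      _ ≤ Real.exp ((‖ζ₀‖ + 1) * S) * S := by
          apply mul_le_mul _ (hLb y hy) (abs_nonneg _) (Real.exp_nonneg _)
          apply Real.exp_le_exp.mpr
          calc ζ.re * L y ≤ |ζ.re * L y| := le_abs_self _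
            _ = |ζ.re| * |L y| := abs_mul _ _
            _ ≤ (‖ζ₀‖ + 1) * S := by
                apply mul_le_mul (le_trans (Complex.abs_re_le_norm ζ) hζa) (hLb y hy)
                  (abs_nonneg _) (by positivity)
      _ = S * Real.exp ((‖ζ₀‖ + 1) * S) := mul_comm _ _
  · filter_upwards [aux_ae_ball μ hs] with y hy
    intro ζ hζ
    simpa [mul_comm] using ((hasDerivAt_id ζ).mul_const ((L y : ℂ))).cexp

end meas
/-- For `p > 2`, a homogeneous operator `P(∂_z)` of order `p` (with `P(-i,…,-i) ≠ 0`)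
and a function `m` of order `p`, there is no finite complex Borel measure `μ` of
compact support on `ℝⁿ` with
`∫ φ(z+ty) dμ(y) = Σ_j (P^j(∂_z)φ)(z) t^{pj}/m(j)` for all polynomials `φ`,
all `z` and all small `t`. -/
theorem stmt13 {n p : ℕ} (hp : 2 < p) (P : MvPolynomial (Fin n) ℂ)
    (hP : P.IsHomogeneous p)
    (hP0 : MvPolynomial.eval (fun _ : Fin n => -Complex.I) P ≠ 0)
    (m : ℕ → ℝ)
    (hm : ∃ c C : ℝ, 0 < c ∧ 0 < C ∧ ∀ j : ℕ,
      c ^ j * Real.Gamma (1 + p * j) ≤ m j ∧ m j ≤ C ^ j * Real.Gamma (1 + p * j)) :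
    ¬ ∃ (μ₁ μ₂ μ₃ μ₄ : Measure (Fin n → ℝ)) (R ε : ℝ),
      IsFiniteMeasure μ₁ ∧ IsFiniteMeasure μ₂ ∧ IsFiniteMeasure μ₃ ∧ IsFiniteMeasure μ₄ ∧
      0 < R ∧
      μ₁ (Metric.closedBall 0 R)ᶜ = 0 ∧ μ₂ (Metric.closedBall 0 R)ᶜ = 0 ∧
      μ₃ (Metric.closedBall 0 R)ᶜ = 0 ∧ μ₄ (Metric.closedBall 0 R)ᶜ = 0 ∧
      0 < ε ∧
      ∀ (φ : MvPolynomial (Fin n) ℂ) (z : Fin n → ℂ) (t : ℂ), ‖t‖ < ε →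
        HasSum
          (fun j : ℕ =>
            MvPolynomial.eval z ((polyOp P)^[j] φ) * t ^ (p * j) / (m j : ℂ))
          (cInt μ₁ μ₂ μ₃ μ₄
            (fun y => MvPolynomial.eval (fun k => z k + t * (y k : ℂ)) φ)) := by
  rintro ⟨μ₁, μ₂, μ₃, μ₄, R, ε, hf1, hf2, hf3, hf4, hR, hsp1, hsp2, hsp3, hsp4, hε, Hyp⟩
  have hp0 : 0 < p := by omega
  obtain ⟨c, C, hc, hC, hmb⟩ := hm
  set A : ℂ := MvPolynomial.eval (fun _ => (1:ℂ)) P with hAdef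
  have hA : A ≠ 0 := by
    intro h0
    apply hP0
    rw [eval_const_of_homog hP (-Complex.I), ← hAdef, h0, mul_zero]
  have hm1 : (0:ℝ) < m 1 := by
    have h := (hmb 1).1
    have hg : (0:ℝ) < Real.Gamma (1 + (p:ℝ) * ((1:ℕ):ℝ)) :=
      Real.Gamma_pos_of_pos (by positivity)
    nlinarith [pow_pos hc 1]
  set L : (Fin n → ℝ) → ℝ := fun y => ∑ k, y k with hLdef
  have hLcont : Continuous L := by
    apply continuous_finset_sum
    exact fun k _ => continuous_apply k
  set S : ℝ := n * R with hSdef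
  have hS0 : 0 ≤ S := by positivity
  have hLb : ∀ y ∈ Metric.closedBall (0 : Fin n → ℝ) R, |L y| ≤ S := by
    intro y hy
    have hyk : ∀ k, |y k| ≤ R := by
      intro k
      have h1 : ‖y‖ ≤ R := by
        have := Metric.mem_closedBall.mp hy
        rwa [dist_zero_right] at this
      exact le_trans (norm_le_pi_norm y k) h1
    calc |L y| ≤ ∑ k, |y k| := Finset.abs_sum_le_sum_abs _ _
      _ ≤ ∑ _k : Fin n, R := Finset.sum_le_sum fun k _ => hyk k
      _ = n * R := by simp [Finset.sum_const, Finset.card_univ, mul_comm]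
  set Mo : ℕ → ℂ := fun N => cInt μ₁ μ₂ μ₃ μ₄ (fun y => ((L y : ℝ) : ℂ)^N) with hModef
  have hMoN : ∀ N : ℕ, Mo N = cInt μ₁ μ₂ μ₃ μ₄ (fun y => ((L y : ℝ) : ℂ)^N) := fun N => rfl
  have hcontN : ∀ N : ℕ, Continuous fun y : Fin n → ℝ => ((L y : ℝ):ℂ)^N := fun N =>
    (Complex.continuous_ofReal.comp hLcont).pow N
  have hboundN : ∀ (N : ℕ), ∀ y ∈ Metric.closedBall (0 : Fin n → ℝ) R,
      ‖((L y:ℝ):ℂ)^N‖ ≤ S^N := by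
    intro N y hy
    rw [norm_pow, Complex.norm_real, Real.norm_eq_abs]
    exact pow_le_pow_left₀ (abs_nonneg _) (hLb y hy) N
  set t0 : ℂ := ((ε/2 : ℝ) : ℂ) with ht0def
  have ht0abs : ‖t0‖ < ε := by
    rw [ht0def, Complex.norm_real, Real.norm_eq_abs, abs_of_pos (by linarith)]
    linarith
  have ht0ne : t0 ≠ 0 := by
    rw [ht0def]
    exact_mod_cast (show (ε/2 : ℝ) ≠ 0 by linarith)
  -- key moment identity
  have key : ∀ N : ℕ, (t0^N) * Mo N
      = if p ∣ N then A^(N/p) * (N.factorial : ℂ) * t0^N / (m (N/p) : ℂ) else 0 := by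
    intro N
    have hH := Hyp ((sPoly n)^N) (fun _ => 0) t0 ht0abs
    have hintg : (fun y : Fin n → ℝ =>
        MvPolynomial.eval (fun k => (fun _ : Fin n => (0:ℂ)) k + t0 * (y k : ℂ)) ((sPoly n)^N))
        = fun y => t0^N * ((L y:ℝ):ℂ)^N := by
      funext y
      rw [map_pow, ← mul_pow]
      congr 1
      rw [sPoly, map_sum]
      simp only [MvPolynomial.eval_X, zero_add]
      rw [← Finset.mul_sum]
      congr 1
      rw [hLdef]
      push_cast
      rfl
    rw [hintg, cInt_const_mul μ₁ μ₂ μ₃ μ₄, ← hMoN N] at hH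
    have hterm : (fun j : ℕ => MvPolynomial.eval (fun _ : Fin n => (0:ℂ))
        ((polyOp P)^[j] ((sPoly n)^N)) * t0 ^ (p*j) / (m j : ℂ))
        = fun j => if p * j = N then A^j * (N.factorial : ℂ) * t0^N / (m j : ℂ) else 0 := by
      funext j
      rw [eval_zero_iter_polyOp hP, ← hAdef]
      by_cases hc' : p * j = N
      · rw [if_pos hc', if_pos hc', hc']
      · rw [if_neg hc', if_neg hc', zero_mul, zero_div]
    rw [hterm] at hH
    by_cases hdvd : p ∣ N
    · obtain ⟨j₀, rfl⟩ := hdvd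
      rw [if_pos ⟨j₀, rfl⟩, Nat.mul_div_cancel_left j₀ hp0]
      have h1 : HasSum (fun j : ℕ => if p * j = p * j₀ then
          A^j * ((p*j₀).factorial : ℂ) * t0^(p*j₀) / (m j : ℂ) else 0)
          (if p * j₀ = p * j₀ then A^j₀ * ((p*j₀).factorial : ℂ) * t0^(p*j₀) / (m j₀ : ℂ) else 0) :=
        hasSum_single j₀ (fun b hb => if_neg fun hEq => hb (Nat.eq_of_mul_eq_mul_left hp0 hEq))
      rw [if_pos rfl] at h1
      exact hH.unique h1
    · rw [if_neg hdvd]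
      have h1 : HasSum (fun j : ℕ => if p * j = N then
          A^j * (N.factorial : ℂ) * t0^N / (m j : ℂ) else 0) 0 := by
        have : (fun j : ℕ => if p * j = N then
            A^j * (N.factorial : ℂ) * t0^N / (m j : ℂ) else 0) = fun _ => (0:ℂ) := by
          funext j
          exact if_neg fun hEq => hdvd ⟨j, hEq.symm⟩
        rw [this]
        exact hasSum_zero
      exact hH.unique h1
  have hMo_not_dvd : ∀ N, ¬ p ∣ N → Mo N = 0 := by
    intro N hN
    have h := key N
    rw [if_neg hN] at h
    exact (mul_eq_zero.mp h).resolve_left (pow_ne_zero _ ht0ne)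
  have hMo_p : Mo p = A * (p.factorial : ℂ) / (m 1 : ℂ) := by
    have h := key p
    rw [if_pos ⟨1, (mul_one p).symm⟩, Nat.div_self hp0] at h
    have h2 : t0^p * Mo p = t0^p * (A * (p.factorial : ℂ) / (m 1 : ℂ)) := by
      rw [h]; ring
    exact mul_left_cancel₀ (pow_ne_zero p ht0ne) h2
  have hMop_ne : Mo p ≠ 0 := by
    rw [hMo_p]
    apply div_ne_zero
    · exact mul_ne_zero hA (by exact_mod_cast p.factorial_ne_zero)
    · exact_mod_cast hm1.ne'
  -- total mass
  set Kt : ℝ := (μ₁ Set.univ).toReal + (μ₂ Set.univ).toReal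
      + (μ₃ Set.univ).toReal + (μ₄ Set.univ).toReal with hKtdef
  have hKt0 : 0 ≤ Kt := by positivity
  have hMo_bound : ∀ N, ‖Mo N‖ ≤ S^N * Kt := by
    intro N
    rw [hMoN N]
    have := cInt_norm_le μ₁ μ₂ μ₃ μ₄ hsp1 hsp2 hsp3 hsp4 (hcontN N) (hboundN N)
    rw [← hKtdef] at this
    exact this
  -- the Fourier-Laplace-type transform
  set H : ℂ → ℂ := fun ζ => cInt μ₁ μ₂ μ₃ μ₄
    (fun y => Complex.exp (ζ * ((L y:ℝ):ℂ))) with hHdef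
  have hexpcont : ∀ ζ : ℂ, Continuous fun y : Fin n → ℝ => Complex.exp (ζ * ((L y:ℝ):ℂ)) :=
    fun ζ => Complex.continuous_exp.comp
      (continuous_const.mul (Complex.continuous_ofReal.comp hLcont))
  have hHsum : ∀ ζ : ℂ, HasSum (fun N : ℕ => ζ^N / (N.factorial : ℂ) * Mo N) (H ζ) := by
    intro ζ
    have hbF : ∀ N : ℕ, ∀ y ∈ Metric.closedBall (0 : Fin n → ℝ) R,
        ‖ζ^N / (N.factorial:ℂ) * ((L y:ℝ):ℂ)^N‖
          ≤ (‖ζ‖ * S)^N / (N.factorial : ℝ) := by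
      intro N y hy
      rw [norm_mul, norm_div, norm_pow, Complex.norm_natCast, mul_pow]
      have h1 := hboundN N y hy
      calc ‖ζ‖^N / (N.factorial : ℝ) * ‖((L y:ℝ):ℂ)^N‖
          ≤ ‖ζ‖^N / (N.factorial : ℝ) * S^N := by
            apply mul_le_mul_of_nonneg_left h1 (by positivity)
        _ = ‖ζ‖ ^ N * S^N / (N.factorial : ℝ) := by
            ring
    have hsum0 := cInt_hasSum μ₁ μ₂ μ₃ μ₄ hsp1 hsp2 hsp3 hsp4
      (fun N y => ζ^N / (N.factorial:ℂ) * ((L y:ℝ):ℂ)^N)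
      (fun N => continuous_const.mul (hcontN N))
      (fun N => (‖ζ‖ * S)^N / (N.factorial : ℝ)) hbF
      (Real.summable_pow_div_factorial _)
    have hterm' : ∀ N : ℕ, cInt μ₁ μ₂ μ₃ μ₄
        (fun y => ζ^N / (N.factorial:ℂ) * ((L y:ℝ):ℂ)^N)
        = ζ^N/(N.factorial:ℂ) * Mo N := by
      intro N
      rw [cInt_const_mul μ₁ μ₂ μ₃ μ₄, ← hMoN N]
    have hfun : (fun y : Fin n → ℝ => ∑' N : ℕ, ζ^N / (N.factorial:ℂ) * ((L y:ℝ):ℂ)^N)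
        = fun y => Complex.exp (ζ * ((L y:ℝ):ℂ)) := by
      funext y
      rw [cexp_eq_tsum]
      apply tsum_congr
      intro N
      rw [mul_pow]
      ring
    rw [hfun] at hsum0
    simp only [hterm'] at hsum0
    rw [hHdef]
    exact hsum0
  have hHdiff : Differentiable ℂ H := by
    have d1 := aux_diff μ₁ hsp1 L hLcont hS0 hLb
    have d2 := aux_diff μ₂ hsp2 L hLcont hS0 hLb
    have d3 := aux_diff μ₃ hsp3 L hLcont hS0 hLb
    have d4 := aux_diff μ₄ hsp4 L hLcont hS0 hLb
    have hHeq : H = fun ζ => (∫ y, Complex.exp (ζ * ((L y:ℝ):ℂ)) ∂μ₁)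
        - (∫ y, Complex.exp (ζ * ((L y:ℝ):ℂ)) ∂μ₂)
        + Complex.I * ((∫ y, Complex.exp (ζ * ((L y:ℝ):ℂ)) ∂μ₃)
        - (∫ y, Complex.exp (ζ * ((L y:ℝ):ℂ)) ∂μ₄)) := by
      funext ζ
      rw [hHdef]
      rfl
    rw [hHeq]
    exact (d1.sub d2).add ((d3.sub d4).const_mul Complex.I)
  have hHgrow : ∀ ζ : ℂ, ‖H ζ‖ ≤ Kt * Real.exp (S * ‖ζ‖) := by
    intro ζ
    have hb : ∀ y ∈ Metric.closedBall (0 : Fin n → ℝ) R,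
        ‖Complex.exp (ζ * ((L y:ℝ):ℂ))‖ ≤ Real.exp (S * ‖ζ‖) := by
      intro y hy
      rw [Complex.norm_exp]
      apply Real.exp_le_exp.mpr
      have hre : (ζ * ((L y:ℝ):ℂ)).re = ζ.re * L y := by simp [Complex.mul_re]
      rw [hre]
      calc ζ.re * L y ≤ |ζ.re * L y| := le_abs_self _
        _ = |ζ.re| * |L y| := abs_mul _ _
        _ ≤ ‖ζ‖ * S :=
            mul_le_mul (Complex.abs_re_le_norm ζ) (hLb y hy) (abs_nonneg _)
              (norm_nonneg _)
        _ = S * ‖ζ‖ := mul_comm _ _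
    have h := cInt_norm_le μ₁ μ₂ μ₃ μ₄ hsp1 hsp2 hsp3 hsp4 (hexpcont ζ) hb
    rw [← hKtdef] at h
    rw [hHdef]
    calc ‖cInt μ₁ μ₂ μ₃ μ₄ (fun y => Complex.exp (ζ * ((L y:ℝ):ℂ)))‖
        ≤ Real.exp (S * ‖ζ‖) * Kt := h
      _ = Kt * Real.exp (S * ‖ζ‖) := mul_comm _ _
  have hHray : ∀ x : ℝ, ‖H ((x:ℂ) * Complex.I)‖ ≤ Kt := by
    intro x
    have hb : ∀ y ∈ Metric.closedBall (0 : Fin n → ℝ) R,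
        ‖Complex.exp (((x:ℂ) * Complex.I) * ((L y:ℝ):ℂ))‖ ≤ 1 := by
      intro y hy
      rw [Complex.norm_exp]
      have : (((x:ℂ) * Complex.I) * ((L y:ℝ):ℂ)).re = 0 := by
        simp [Complex.mul_re]
      rw [this, Real.exp_zero]
    have h := cInt_norm_le μ₁ μ₂ μ₃ μ₄ hsp1 hsp2 hsp3 hsp4 (hexpcont _) hb
    rw [← hKtdef, one_mul] at h
    rw [hHdef]
    exact h
  have hpc : (p:ℂ) ≠ 0 := Nat.cast_ne_zero.mpr hp0.ne'
  have hHsym : ∀ ζ : ℂ, H (Complex.exp (2 * (Real.pi:ℂ) * Complex.I / p) * ζ) = H ζ := by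
    intro ζ
    apply (hHsum _).unique
    have hfe : (fun N : ℕ => (Complex.exp (2 * (Real.pi:ℂ) * Complex.I / p) * ζ)^N
        / (N.factorial : ℂ) * Mo N)
        = fun N : ℕ => ζ^N / (N.factorial : ℂ) * Mo N := by
      funext N
      by_cases hdvd : p ∣ N
      · obtain ⟨j, rfl⟩ := hdvd
        rw [mul_pow]
        have hω : (Complex.exp (2 * (Real.pi:ℂ) * Complex.I / p))^(p*j) = 1 := by
          rw [← Complex.exp_nat_mul]
          have heq : ((p*j : ℕ):ℂ) * (2 * (Real.pi:ℂ) * Complex.I / p)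
              = (j:ℕ) * (2 * (Real.pi:ℂ) * Complex.I) := by
            push_cast
            field_simp
          rw [heq, Complex.exp_nat_mul_two_pi_mul_I]
        rw [hω, one_mul]
      · rw [hMo_not_dvd N hdvd, mul_zero, mul_zero]
    rw [hfe]
    exact hHsum ζ
  have hbdd : ∀ ζ, ‖H ζ‖ ≤ Kt := bounded_of_rays hHdiff hp hHgrow hHsym hHray
  have hbrange : Bornology.IsBounded (Set.range H) := by
    apply isBounded_iff_forall_norm_le.mpr
    exact ⟨Kt, by rintro z ⟨ζ, rfl⟩; exact hbdd ζ⟩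
  have hconst : ∀ ζ, H ζ = H 0 := fun ζ =>
    hHdiff.apply_eq_apply_of_bounded hbrange ζ 0
  have hH0 : H 0 = Mo 0 := by
    have h0 := hHsum 0
    have he : (fun N : ℕ => (0:ℂ)^N / (N.factorial : ℂ) * Mo N)
        = fun N : ℕ => if N = 0 then Mo 0 else 0 := by
      funext N
      cases N with
      | zero => simp
      | succ N => simp
    rw [he] at h0
    exact (h0.unique (hasSum_ite_eq 0 (Mo 0))).symm ▸ rfl
  -- tail estimate
  set E : ℝ := ∑' N : ℕ, S ^ N / (N.factorial : ℝ) with hEdef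
  set D : ℝ := Kt * S^(p+1) * E with hDdef
  have hE0 : 0 ≤ E := tsum_nonneg (fun N => by positivity)
  have hD0 : 0 ≤ D := by positivity
  have htail : ∀ x : ℝ, 0 < x → x ≤ 1 →
      ‖Mo p‖ * x ^ p / (p.factorial : ℝ) ≤ D * x^(p+1) := by
    intro x hx hx1
    have hsum := hHsum (x:ℂ)
    rw [hconst (x:ℂ), hH0] at hsum
    set g : ℕ → ℂ := fun N => ((x:ℂ))^N / (N.factorial : ℂ) * Mo N with hgdef
    have hg0 : g 0 = Mo 0 := by simp [hgdef]
    have hgmid : ∀ i, 0 < i → i < p → g i = 0 := by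
      intro i h0 hip
      have hnd : ¬ p ∣ i := by
        intro hdvd
        have := Nat.le_of_dvd h0 hdvd
        omega
      simp [hgdef, hMo_not_dvd i hnd]
    have hfin : ∑ i ∈ Finset.range (p+1), g i = Mo 0 + g p := by
      rw [Finset.sum_range_succ]
      congr 1
      rw [Finset.sum_eq_single 0]
      · exact hg0
      · intro b hb hb0
        exact hgmid b (Nat.pos_of_ne_zero hb0) (Finset.mem_range.mp hb)
      · intro h; exact absurd (Finset.mem_range.mpr (by omega)) h
    have hshift : HasSum (fun j => g (j + (p+1))) (-(g p)) := by
      have := (hasSum_nat_add_iff' (f := g) (p+1)).mpr hsum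
      rw [hfin] at this
      convert this using 1
      · rfl
      · ring
    set u : ℕ → ℝ := fun j => x^(p+1) * (Kt * (S^(p+1) * (S^j / (j.factorial : ℝ)))) with hudef
    have hus : Summable u := by
      rw [hudef]
      exact (((Real.summable_pow_div_factorial S).mul_left _).mul_left _).mul_left _
    have hgnorm : ∀ N : ℕ, ‖g N‖ = x^N / (N.factorial : ℝ) * ‖Mo N‖ := by
      intro N
      rw [hgdef]
      rw [norm_mul, norm_div, norm_pow, Complex.norm_real, Real.norm_eq_abs,
        abs_of_pos hx, Complex.norm_natCast]
    have hgu : ∀ j : ℕ, ‖g (j + (p+1))‖ ≤ u j := by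
      intro j
      rw [hgnorm]
      have e1 : x^(j+(p+1)) ≤ x^(p+1) := pow_le_pow_of_le_one hx.le hx1 (by omega)
      have e2 : ((p+1).factorial : ℝ) ≤ (((j+(p+1)).factorial : ℕ) : ℝ) := by
        exact_mod_cast Nat.factorial_le (by omega)
      have e2' : ((j.factorial : ℕ) : ℝ) ≤ (((j+(p+1)).factorial : ℕ) : ℝ) := by
        exact_mod_cast Nat.factorial_le (by omega)
      have e3 : S^(j+(p+1)) = S^(p+1) * S^j := by
        rw [add_comm j (p+1), pow_add]
      have hMb := hMo_bound (j + (p+1))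
      calc x^(j+(p+1)) / ((j+(p+1)).factorial : ℝ) * ‖Mo (j+(p+1))‖
          ≤ x^(j+(p+1)) / ((j+(p+1)).factorial : ℝ) * (S^(j+(p+1)) * Kt) := by
            apply mul_le_mul_of_nonneg_left hMb (by positivity)
        _ = (x^(j+(p+1)) * S^(j+(p+1)) * Kt) / ((j+(p+1)).factorial : ℝ) := by ring
        _ ≤ (x^(p+1) * (S^(p+1) * S^j) * Kt) / ((j.factorial : ℕ) : ℝ) := by
            apply div_le_div₀ (by positivity) ?_ (by positivity) e2'
            rw [← e3]
            exact mul_le_mul_of_nonneg_right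
              (mul_le_mul_of_nonneg_right e1 (by positivity)) hKt0
        _ = u j := by rw [hudef]; ring
    have hsn : Summable fun j => ‖g (j + (p+1))‖ :=
      Summable.of_nonneg_of_le (fun j => norm_nonneg _) hgu hus
    have hnorm : ‖g p‖ ≤ ∑' j, u j := by
      have h1 : ‖g p‖ = ‖-(g p)‖ := (norm_neg _).symm
      rw [h1, ← hshift.tsum_eq]
      exact le_trans (norm_tsum_le_tsum_norm hsn) (Summable.tsum_le_tsum hgu hsn hus)
    have htsumu : ∑' j, u j = x^(p+1) * (Kt * (S^(p+1) * E)) := by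
      rw [hudef, hEdef, tsum_mul_left, tsum_mul_left, tsum_mul_left]
    calc ‖Mo p‖ * x^p / (p.factorial : ℝ) = ‖g p‖ := by rw [hgnorm]; ring
      _ ≤ x^(p+1) * (Kt * (S^(p+1) * E)) := hnorm.trans_eq htsumu
      _ = D * x^(p+1) := by rw [hDdef]; ring
  -- conclude Mo p = 0, contradiction
  apply hMop_ne
  by_contra hne
  have hpos : 0 < ‖Mo p‖ := norm_pos_iff.mpr hne
  have hfp : (0:ℝ) < (p.factorial : ℝ) := by exact_mod_cast p.factorial_pos
  set x : ℝ := min 1 (‖Mo p‖ / ((p.factorial : ℝ) * (D + 1) * 2)) with hxdef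
  have hx0 : 0 < x := lt_min one_pos (by positivity)
  have hx1 : x ≤ 1 := min_le_left _ _
  have h := htail x hx0 hx1
  have hxp : 0 < x^p := pow_pos hx0 p
  have h2 : ‖Mo p‖ / (p.factorial : ℝ) ≤ D * x := by
    have e : ‖Mo p‖ * x^p / (p.factorial : ℝ) = (‖Mo p‖ / (p.factorial : ℝ)) * x^p := by ring
    have e2 : D * x^(p+1) = (D * x) * x^p := by ring
    rw [e, e2] at h
    exact le_of_mul_le_mul_right h hxp
  have hxle : x ≤ ‖Mo p‖ / ((p.factorial : ℝ) * (D+1) * 2) := min_le_right _ _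
  have h3 : D * x ≤ ‖Mo p‖ / ((p.factorial : ℝ) * 2) := by
    calc D * x ≤ (D+1) * x := by nlinarith [hx0]
      _ ≤ (D+1) * (‖Mo p‖ / ((p.factorial : ℝ) * (D+1) * 2)) := by
          apply mul_le_mul_of_nonneg_left hxle (by linarith)
      _ = ‖Mo p‖ / ((p.factorial : ℝ) * 2) := by
          field_simp
  have hcontra : ‖Mo p‖ / (p.factorial : ℝ) ≤ ‖Mo p‖ / ((p.factorial : ℝ) * 2) :=
    le_trans h2 h3
  rw [div_le_div_iff₀ (by positivity) (by positivity)] at hcontra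
  nlinarith [hpos, hfp]
end

section
/- Let μ be a finite complex Borel measure with compact support in ℝⁿ and let F(ζ) = ∫_{ℝⁿ} e^{−i ζ·y} dμ(y) be its Fourier–Laplace transform, an entire function on ℂⁿ. Then for every polynomial φ on ℂⁿ, every z ∈ ℂⁿ and every t ∈ ℂ, ∫_{ℝⁿ} φ(z+ty) dμ(y) = (F(it∂_z)φ)(z), where F(it∂_z) is defined by substituting it∂_{z_k} for ζ_k in the power series expansion of F. -/
open MeasureTheory MvPolynomial

namespace Zal

variable {n : ℕ}

lemma iterate_pderiv_monomial (k : Fin n) (m : ℕ) (γ : Fin n →₀ ℕ) (c : ℂ) :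
    (fun χ => pderiv k χ)^[m] (monomial γ c) =
      monomial (γ - Finsupp.single k m) ((((γ k).descFactorial m : ℕ) : ℂ) * c) := by
  induction m with
  | zero => simp
  | succ m ih =>
    rw [Function.iterate_succ_apply', ih, pderiv_monomial]
    have h1 : γ - Finsupp.single k m - Finsupp.single k 1 = γ - Finsupp.single k (m + 1) := by
      rw [tsub_tsub, ← Finsupp.single_add]
    have h2 : (γ - Finsupp.single k m) k = γ k - m := by
      rw [Finsupp.tsub_apply, Finsupp.single_eq_same]
    rw [h1, h2, Nat.descFactorial_succ]
    push_cast
    ring_nf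

lemma sum_single_apply_eq_zero (α : Fin n →₀ ℕ) (k : Fin n) :
    ∀ l : List (Fin n), k ∉ l →
      ((l.map fun j => Finsupp.single j (α j)).sum) k = 0
  | [], _ => rfl
  | j :: l, h => by
    have hjk : j ≠ k := fun e => h (e ▸ (List.mem_cons_self : j ∈ j :: l))
    have := sum_single_apply_eq_zero α k l (fun hm => h (List.mem_cons_of_mem j hm))
    simp [Finsupp.single_eq_of_ne' hjk, this]

lemma foldr_monomial (α : Fin n →₀ ℕ) (γ : Fin n →₀ ℕ) (c : ℂ) :
    ∀ l : List (Fin n), l.Nodup →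
      l.foldr (fun k ψ => (fun χ => MvPolynomial.pderiv k χ)^[α k] ψ) (monomial γ c) =
        monomial (γ - (l.map fun k => Finsupp.single k (α k)).sum)
          ((l.map fun k => (((γ k).descFactorial (α k) : ℕ) : ℂ)).prod * c)
  | [], _ => by simp
  | k :: l, h => by
    have hk : k ∉ l := (List.nodup_cons.mp h).1
    have hl : l.Nodup := (List.nodup_cons.mp h).2
    rw [List.foldr_cons, foldr_monomial α γ c l hl, iterate_pderiv_monomial]
    have hS : ((l.map fun j => Finsupp.single j (α j)).sum) k = 0 :=
      sum_single_apply_eq_zero α k l hk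
    have h2 : (γ - (l.map fun j => Finsupp.single j (α j)).sum) k = γ k := by
      rw [Finsupp.tsub_apply, hS, Nat.sub_zero]
    rw [h2, List.map_cons, List.map_cons, List.sum_cons, List.prod_cons, tsub_tsub,
      add_comm ((l.map fun j => Finsupp.single j (α j)).sum)]
    ring_nf

lemma mderiv_monomial (α γ : Fin n →₀ ℕ) (c : ℂ) :
    mderiv α (monomial γ c) =
      monomial (γ - α) ((∏ k : Fin n, (((γ k).descFactorial (α k) : ℕ) : ℂ)) * c) := by
  have hs : ((List.finRange n).map fun k => Finsupp.single k (α k)).sum = α := by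
    rw [← Fin.sum_univ_def (fun k => Finsupp.single k (α k)), Finsupp.univ_sum_single]
  have hp : ((List.finRange n).map fun k => (((γ k).descFactorial (α k) : ℕ) : ℂ)).prod =
      ∏ k : Fin n, (((γ k).descFactorial (α k) : ℕ) : ℂ) :=
    (Fin.prod_univ_def _).symm
  rw [mderiv, foldr_monomial α γ c _ (List.nodup_finRange n), hs, hp]


/-- `mderiv α` as a linear map. -/
noncomputable def mderivL (α : Fin n →₀ ℕ) :
    MvPolynomial (Fin n) ℂ →ₗ[ℂ] MvPolynomial (Fin n) ℂ :=
  (List.finRange n).foldr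
    (fun k L => ((pderiv k : Derivation ℂ _ _).toLinearMap ^ α k) ∘ₗ L) LinearMap.id

lemma mderiv_eq (α : Fin n →₀ ℕ) (φ : MvPolynomial (Fin n) ℂ) :
    mderiv α φ = mderivL α φ := by
  rw [mderiv, mderivL]
  induction (List.finRange n) with
  | nil => rfl
  | cons k l ih =>
    rw [List.foldr_cons, List.foldr_cons, ih, LinearMap.comp_apply, Module.End.pow_apply]
    rfl

lemma mderiv_sum {ι : Type*} (α : Fin n →₀ ℕ) (s : Finset ι)
    (f : ι → MvPolynomial (Fin n) ℂ) :
    mderiv α (∑ i ∈ s, f i) = ∑ i ∈ s, mderiv α (f i) := by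
  simp only [mderiv_eq, map_sum]

lemma mderiv_monomial_eq_zero {α γ : Fin n →₀ ℕ} {c : ℂ} (h : ¬ α ≤ γ) :
    mderiv α (monomial γ c) = 0 := by
  rw [mderiv_monomial]
  obtain ⟨k, hk⟩ : ∃ k, γ k < α k := by
    by_contra h'
    push_neg at h'
    exact h (Finsupp.le_def.mpr h')
  have hz : (((γ k).descFactorial (α k) : ℕ) : ℂ) = 0 := by
    rw [Nat.descFactorial_eq_zero_iff_lt.mpr hk, Nat.cast_zero]
  rw [Finset.prod_eq_zero (Finset.mem_univ k) hz, zero_mul, map_zero]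


lemma taylor_monomial (γ : Fin n →₀ ℕ) (c : ℂ) (z w : Fin n → ℂ) :
    eval (fun k => z k + w k) (monomial γ c) =
      ∑' α : Fin n →₀ ℕ,
        (∏ k : Fin n, w k ^ α k / (Nat.factorial (α k) : ℂ)) *
          eval z (mderiv α (monomial γ c)) := by
  rw [tsum_eq_sum (s := Finset.Iic γ)
    (fun α hα => by
      rw [mderiv_monomial_eq_zero (by simpa [Finset.mem_Iic] using hα), map_zero, mul_zero])]
  have key : ∀ α ∈ Finset.Iic γ,
      (∏ k : Fin n, w k ^ α k / (Nat.factorial (α k) : ℂ)) *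
          eval z (mderiv α (monomial γ c)) =
        c * ∏ k : Fin n, (w k ^ α k * z k ^ (γ k - α k) * ((γ k).choose (α k) : ℂ)) := by
    intro α _
    rw [mderiv_monomial, eval_monomial, Finsupp.prod_fintype _ _ (fun i => pow_zero _)]
    simp only [Finsupp.tsub_apply]
    have step : (∏ k : Fin n, w k ^ α k / (Nat.factorial (α k) : ℂ)) *
        ((∏ k : Fin n, (((γ k).descFactorial (α k) : ℕ) : ℂ)) * c *
          ∏ k : Fin n, z k ^ (γ k - α k)) =
        c * ∏ k : Fin n, (w k ^ α k / (Nat.factorial (α k) : ℂ) *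
          (((γ k).descFactorial (α k) : ℕ) : ℂ) * z k ^ (γ k - α k)) := by
      rw [Finset.prod_mul_distrib, Finset.prod_mul_distrib]
      ring
    rw [step]
    congr 1
    refine Finset.prod_congr rfl fun k _ => ?_
    have hfac : ((Nat.factorial (α k) : ℕ) : ℂ) ≠ 0 :=
      Nat.cast_ne_zero.mpr (Nat.factorial_ne_zero _)
    rw [Nat.descFactorial_eq_factorial_mul_choose]
    push_cast
    field_simp
  rw [Finset.sum_congr rfl key, ← Finset.mul_sum, eval_monomial,
    Finsupp.prod_fintype _ _ (fun i => pow_zero _)]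
  congr 1
  have hbin : ∀ k : Fin n, (z k + w k) ^ (γ k) =
      ∑ j ∈ Finset.range (γ k + 1), w k ^ j * z k ^ (γ k - j) * ((γ k).choose j : ℂ) := by
    intro k
    rw [add_comm (z k), add_pow]
  rw [Finset.prod_congr rfl (fun k _ => hbin k), Finset.prod_univ_sum]
  refine Finset.sum_nbij' (fun g => Finsupp.equivFunOnFinite.symm g) (fun α => ⇑α)
    ?_ ?_ ?_ ?_ ?_
  · intro g hg
    simp only [Fintype.mem_piFinset, Finset.mem_range, Nat.lt_succ_iff] at hg
    simp only [Finset.mem_Iic]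
    exact Finsupp.le_def.mpr (by simpa using hg)
  · intro α hα
    simp only [Finset.mem_Iic] at hα
    simp only [Fintype.mem_piFinset, Finset.mem_range, Nat.lt_succ_iff]
    exact fun k => Finsupp.le_def.mp hα k
  · intro g _
    funext k
    simp
  · intro α _
    simp
  · intro g _
    simp


lemma mderiv_eq_zero (φ : MvPolynomial (Fin n) ℂ) {α : Fin n →₀ ℕ}
    (hα : ¬ α ≤ φ.support.sup id) : mderiv α φ = 0 := by
  conv_lhs => rw [← support_sum_monomial_coeff φ]
  rw [mderiv_sum]
  refine Finset.sum_eq_zero fun γ hγ => ?_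
  exact mderiv_monomial_eq_zero fun h => hα (h.trans (Finset.le_sup (f := id) hγ))

lemma taylor (φ : MvPolynomial (Fin n) ℂ) (z w : Fin n → ℂ) :
    eval (fun k => z k + w k) φ =
      ∑' α : Fin n →₀ ℕ,
        (∏ k : Fin n, w k ^ α k / (Nat.factorial (α k) : ℂ)) *
          eval z (mderiv α φ) := by
  set B := φ.support.sup id with hB
  rw [tsum_eq_sum (s := Finset.Iic B)
    (fun α hα => by
      rw [mderiv_eq_zero φ (by simpa [Finset.mem_Iic] using hα), map_zero, mul_zero])]
  have hsplit : ∀ α : Fin n →₀ ℕ, eval z (mderiv α φ) =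
      ∑ γ ∈ φ.support, eval z (mderiv α (monomial γ (coeff γ φ))) := by
    intro α
    conv_lhs => rw [← support_sum_monomial_coeff φ]
    rw [mderiv_sum, map_sum]
  conv_lhs => rw [← support_sum_monomial_coeff φ]
  rw [map_sum]
  simp_rw [hsplit, Finset.mul_sum]
  rw [Finset.sum_comm]
  refine Finset.sum_congr rfl fun γ hγ => ?_
  rw [taylor_monomial, tsum_eq_sum (s := Finset.Iic B)]
  intro α hα
  simp only [Finset.mem_Iic] at hα
  have hγB : γ ≤ B := Finset.le_sup (f := id) hγ
  rw [mderiv_monomial_eq_zero (fun h => hα (h.trans hγB)), map_zero, mul_zero]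


lemma integrable_aux (ν : Measure (Fin n → ℝ)) [IsFiniteMeasure ν] (R : ℝ)
    (hc : ν (Metric.closedBall 0 R)ᶜ = 0) {f : (Fin n → ℝ) → ℂ} (hf : Continuous f) :
    Integrable f ν := by
  obtain ⟨C, hC⟩ := (isCompact_closedBall (0 : Fin n → ℝ) R).exists_bound_of_continuousOn
    hf.continuousOn
  refine Integrable.mono' (integrable_const C) hf.aestronglyMeasurable ?_
  filter_upwards [mem_ae_iff.mpr hc] with y hy
  exact hC y hy

end Zal

namespace Zal

lemma cInt_sum_const_mul (μ₁ μ₂ μ₃ μ₄ : Measure (Fin n → ℝ))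
    (h₁ : IsFiniteMeasure μ₁) (h₂ : IsFiniteMeasure μ₂)
    (h₃ : IsFiniteMeasure μ₃) (h₄ : IsFiniteMeasure μ₄)
    (R : ℝ)
    (hc₁ : μ₁ (Metric.closedBall 0 R)ᶜ = 0) (hc₂ : μ₂ (Metric.closedBall 0 R)ᶜ = 0)
    (hc₃ : μ₃ (Metric.closedBall 0 R)ᶜ = 0) (hc₄ : μ₄ (Metric.closedBall 0 R)ᶜ = 0)
    {ι : Type*} (s : Finset ι) (C : ι → ℂ) (g : ι → (Fin n → ℝ) → ℂ)
    (hg : ∀ i, Continuous (g i)) :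
    cInt μ₁ μ₂ μ₃ μ₄ (fun y => ∑ i ∈ s, C i * g i y) =
      ∑ i ∈ s, C i * cInt μ₁ μ₂ μ₃ μ₄ (g i) := by
  have key : ∀ (ν : Measure (Fin n → ℝ)), IsFiniteMeasure ν →
      ν (Metric.closedBall 0 R)ᶜ = 0 →
      ∫ y, (∑ i ∈ s, C i * g i y) ∂ν = ∑ i ∈ s, C i * ∫ y, g i y ∂ν := by
    intro ν hν hcν
    haveI := hν
    rw [integral_finset_sum s (fun i _ => (integrable_aux ν R hcν (hg i)).const_mul (C i))]
    exact Finset.sum_congr rfl fun i _ => integral_const_mul _ _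
  simp only [cInt]
  rw [key μ₁ h₁ hc₁, key μ₂ h₂ hc₂, key μ₃ h₃ hc₃, key μ₄ h₄ hc₄,
    ← Finset.sum_sub_distrib, ← Finset.sum_sub_distrib, Finset.mul_sum,
    ← Finset.sum_add_distrib]
  exact Finset.sum_congr rfl fun i _ => by ring

end Zal

/-- Zalcman's lemma in the polynomial case: for a finite compactly supported complex
Borel measure `μ = μ₁ - μ₂ + i(μ₃ - μ₄)` on `ℝⁿ` with Fourier–Laplace transform `F`,
and for every polynomial `φ`, `∫ φ(z+ty) dμ(y) = (F(it∂_z)φ)(z)`, where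
`F(it∂_z)φ = Σ_α (t^{|α|}/α!)(∫ y^α dμ) ∂^α φ`. -/
theorem stmt14 {n : ℕ} (μ₁ μ₂ μ₃ μ₄ : Measure (Fin n → ℝ))
    (h₁ : IsFiniteMeasure μ₁) (h₂ : IsFiniteMeasure μ₂)
    (h₃ : IsFiniteMeasure μ₃) (h₄ : IsFiniteMeasure μ₄)
    (R : ℝ) (hR : 0 < R)
    (hc₁ : μ₁ (Metric.closedBall 0 R)ᶜ = 0) (hc₂ : μ₂ (Metric.closedBall 0 R)ᶜ = 0)
    (hc₃ : μ₃ (Metric.closedBall 0 R)ᶜ = 0) (hc₄ : μ₄ (Metric.closedBall 0 R)ᶜ = 0) :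
    ∀ (φ : MvPolynomial (Fin n) ℂ) (z : Fin n → ℂ) (t : ℂ),
      cInt μ₁ μ₂ μ₃ μ₄ (fun y => MvPolynomial.eval (fun k => z k + t * (y k : ℂ)) φ) =
        ∑' α : Fin n →₀ ℕ,
          (t ^ (∑ k : Fin n, α k) / (∏ k : Fin n, (Nat.factorial (α k) : ℂ))) *
            cInt μ₁ μ₂ μ₃ μ₄ (fun y => ∏ k : Fin n, ((y k : ℂ)) ^ (α k)) *
            MvPolynomial.eval z (mderiv α φ) := by
  intro φ z t
  classical
  set S : Finset (Fin n →₀ ℕ) := Finset.Iic (φ.support.sup id) with hSdef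
  have hvan : ∀ α : Fin n →₀ ℕ, α ∉ S → MvPolynomial.eval z (mderiv α φ) = 0 := by
    intro α hα
    rw [Zal.mderiv_eq_zero φ (by simpa [hSdef, Finset.mem_Iic] using hα), map_zero]
  have hpt : ∀ y : Fin n → ℝ,
      MvPolynomial.eval (fun k => z k + t * (y k : ℂ)) φ =
        ∑ α ∈ S, ((t ^ (∑ k : Fin n, α k) / (∏ k : Fin n, (Nat.factorial (α k) : ℂ))) *
          MvPolynomial.eval z (mderiv α φ)) * ∏ k : Fin n, ((y k : ℂ)) ^ (α k) := by
    intro y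
    rw [Zal.taylor φ z (fun k => t * (y k : ℂ)),
      tsum_eq_sum (s := S) (fun α hα => by rw [hvan α hα, mul_zero])]
    refine Finset.sum_congr rfl fun α _ => ?_
    have hcoef : (∏ k : Fin n, (t * (y k : ℂ)) ^ α k / (Nat.factorial (α k) : ℂ)) =
        (t ^ (∑ k : Fin n, α k) / (∏ k : Fin n, (Nat.factorial (α k) : ℂ))) *
          ∏ k : Fin n, ((y k : ℂ)) ^ (α k) := by
      rw [Finset.prod_div_distrib]
      simp_rw [mul_pow]
      rw [Finset.prod_mul_distrib, Finset.prod_pow_eq_pow_sum]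
      ring
    rw [hcoef]
    ring
  have hEq : (fun y : Fin n → ℝ => MvPolynomial.eval (fun k => z k + t * (y k : ℂ)) φ) =
      fun y => ∑ α ∈ S,
        ((t ^ (∑ k : Fin n, α k) / (∏ k : Fin n, (Nat.factorial (α k) : ℂ))) *
          MvPolynomial.eval z (mderiv α φ)) * ∏ k : Fin n, ((y k : ℂ)) ^ (α k) :=
    funext hpt
  have hg : ∀ α : Fin n →₀ ℕ,
      Continuous fun y : Fin n → ℝ => ∏ k : Fin n, ((y k : ℂ)) ^ (α k) := fun α =>
    continuous_finset_prod _ fun k _ =>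
      (Complex.continuous_ofReal.comp (continuous_apply k)).pow _
  rw [hEq, Zal.cInt_sum_const_mul μ₁ μ₂ μ₃ μ₄ h₁ h₂ h₃ h₄ R hc₁ hc₂ hc₃ hc₄ S _ _ hg,
    tsum_eq_sum (s := S) (fun α hα => by rw [hvan α hα, mul_zero])]
  exact Finset.sum_congr rfl fun α _ => by ring
end
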